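/- arXiv:math/0604470 — 3 statements merged into one kernel-verified Lean document; each statement's English description precedes it below -/
import Mathlib

section
/- There exists a constant C > 0 such that for all positive integers m and all irrational θ, Y(θ) ≤ Y(mθ) + C·log m, where Y is the Yoccoz–Brjuno function. -/
open scoped ENNReal
open Classical

/-- The Gauss-map iterates of `θ`: `θ_0 = {θ}`, `θ_{n+1} = {1/θ_n}`. -/
noncomputable def gaussIter (θ : ℝ) : ℕ → ℝ
  | 0 => Int.fract θ
  | n + 1 => Int.fract (1 / gaussIter θ n)

/-- Yoccoz's Brjuno function `Y(θ) = ∑ θ_0⋯θ_{n-1} log(1/θ_n) ∈ (0, ∞]` for irrational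
`θ`, and `Y(θ) = ∞` for rational `θ`. -/
noncomputable def brjunoY (θ : ℝ) : ℝ≥0∞ :=
  if Irrational θ then
    ∑' n : ℕ,
      ENNReal.ofReal ((∏ i ∈ Finset.range n, gaussIter θ i) * Real.log (1 / gaussIter θ n))
  else ⊤

namespace BrjAux

lemma irrational_inv {x : ℝ} (hx : Irrational x) : Irrational x⁻¹ := by
  intro ⟨q, hq⟩
  have hx0 : x ≠ 0 := fun h => (hx.ne_int 0) (by simpa using h)
  exact hx ⟨q⁻¹, by rw [Rat.cast_inv, hq, inv_inv]⟩

lemma irrational_fract {x : ℝ} (hx : Irrational x) : Irrational (Int.fract x) := by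
  have := hx.sub_intCast ⌊x⌋
  rwa [Int.fract]

lemma gauss_irr {θ : ℝ} (hθ : Irrational θ) : ∀ n, Irrational (gaussIter θ n) := by
  intro n
  induction n with
  | zero => exact irrational_fract hθ
  | succ n ih =>
    show Irrational (Int.fract (1 / gaussIter θ n))
    exact irrational_fract (by simpa [one_div] using irrational_inv ih)

lemma gauss_pos {θ : ℝ} (hθ : Irrational θ) (n : ℕ) : 0 < gaussIter θ n := by
  have h := gauss_irr hθ n
  have h0 : gaussIter θ n ≠ 0 := by
    intro h0; exact (h.ne_int 0) (by exact_mod_cast h0)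
  cases n with
  | zero => exact lt_of_le_of_ne (Int.fract_nonneg θ) (Ne.symm h0)
  | succ n => exact lt_of_le_of_ne (Int.fract_nonneg _) (Ne.symm h0)

lemma gauss_lt_one (θ : ℝ) (n : ℕ) : gaussIter θ n < 1 := by
  cases n with
  | zero => exact Int.fract_lt_one θ
  | succ n => exact Int.fract_lt_one _

noncomputable def acf (θ : ℝ) (n : ℕ) : ℤ := ⌊1 / gaussIter θ n⌋
noncomputable def pq (θ : ℝ) : ℕ → ℤ × ℤ
  | 0 => (1, 0)
  | 1 => (0, 1)
  | n + 2 => ((pq θ n).1 + acf θ n * (pq θ (n + 1)).1,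
              (pq θ n).2 + acf θ n * (pq θ (n + 1)).2)
noncomputable def pc (θ : ℝ) (n : ℕ) : ℤ := (pq θ n).1
noncomputable def qc (θ : ℝ) (n : ℕ) : ℤ := (pq θ n).2
noncomputable def bet (θ : ℝ) (n : ℕ) : ℝ := ∏ i ∈ Finset.range n, gaussIter θ i
lemma pc_zero (θ : ℝ) : pc θ 0 = 1 := rfl
lemma pc_one (θ : ℝ) : pc θ 1 = 0 := rfl
lemma qc_zero (θ : ℝ) : qc θ 0 = 0 := rfl
lemma qc_one (θ : ℝ) : qc θ 1 = 1 := rfl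
lemma pc_rec (θ : ℝ) (n : ℕ) : pc θ (n + 2) = pc θ n + acf θ n * pc θ (n + 1) := by
  simp [pc, pq]
lemma qc_rec (θ : ℝ) (n : ℕ) : qc θ (n + 2) = qc θ n + acf θ n * qc θ (n + 1) := by
  simp [qc, pq]
lemma bet_zero (θ : ℝ) : bet θ 0 = 1 := by simp [bet]
lemma bet_succ (θ : ℝ) (n : ℕ) : bet θ (n + 1) = bet θ n * gaussIter θ n := by
  simp [bet, Finset.prod_range_succ]

-- NEW material
variable {θ : ℝ}

lemma bet_pos (hθ : Irrational θ) (n : ℕ) : 0 < bet θ n :=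
  Finset.prod_pos fun i _ => gauss_pos hθ i

lemma bet_succ_lt (hθ : Irrational θ) (n : ℕ) : bet θ (n + 1) < bet θ n := by
  rw [bet_succ]
  nth_rewrite 2 [← mul_one (bet θ n)]
  exact mul_lt_mul_of_pos_left (gauss_lt_one θ n) (bet_pos hθ n)

lemma bet_le_one (hθ : Irrational θ) (n : ℕ) : bet θ n ≤ 1 := by
  induction n with
  | zero => simp [bet_zero]
  | succ n ih => exact le_of_lt (lt_of_lt_of_le (bet_succ_lt hθ n) ih)

lemma bet_lt_one (hθ : Irrational θ) (n : ℕ) : bet θ (n + 1) < 1 :=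
  lt_of_lt_of_le (bet_succ_lt hθ n) (bet_le_one hθ n)

lemma bet_strict_anti (hθ : Irrational θ) : StrictAnti (bet θ) :=
  strictAnti_nat_of_succ_lt (bet_succ_lt hθ)

lemma acf_one_le (hθ : Irrational θ) (n : ℕ) : 1 ≤ acf θ n := by
  have h1 : (1:ℝ) ≤ 1 / gaussIter θ n :=
    (le_div_iff₀ (gauss_pos hθ n)).mpr (by simpa using (gauss_lt_one θ n).le)
  exact_mod_cast Int.le_floor.mpr (by exact_mod_cast h1)

lemma gauss_succ_eq (hθ : Irrational θ) (n : ℕ) :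
    gaussIter θ (n + 1) = 1 / gaussIter θ n - acf θ n := by
  show Int.fract (1 / gaussIter θ n) = _
  rw [Int.fract, acf]

lemma bet_rec (hθ : Irrational θ) (n : ℕ) :
    bet θ (n + 2) = bet θ n - acf θ n * bet θ (n + 1) := by
  have hg := gauss_pos hθ n
  rw [bet_succ, gauss_succ_eq hθ, bet_succ]
  field_simp

lemma key_identity (hθ : Irrational θ) (n : ℕ) :
    (pc θ n : ℝ) - qc θ n * Int.fract θ = (-1 : ℝ) ^ n * bet θ n := by
  induction n using Nat.strong_induction_on with
  | _ n ih =>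
    match n with
    | 0 => simp [pc_zero, qc_zero, bet_zero]
    | 1 =>
      rw [pc_one, qc_one, bet_succ, bet_zero]
      show ((0:ℤ):ℝ) - ((1:ℤ):ℝ) * Int.fract θ = (-1:ℝ)^1 * (1 * Int.fract θ)
      push_cast; ring
    | (n + 2) =>
      have h1 := ih n (by omega)
      have h2 := ih (n + 1) (by omega)
      rw [pc_rec, qc_rec, bet_rec hθ]
      push_cast
      calc (pc θ n : ℝ) + acf θ n * pc θ (n+1) - (qc θ n + acf θ n * qc θ (n+1)) * Int.fract θ
          = ((pc θ n : ℝ) - qc θ n * Int.fract θ)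
            + acf θ n * ((pc θ (n+1) : ℝ) - qc θ (n+1) * Int.fract θ) := by ring
        _ = (-1:ℝ)^n * bet θ n + acf θ n * ((-1:ℝ)^(n+1) * bet θ (n+1)) := by rw [h1, h2]
        _ = (-1:ℝ)^(n+2) * (bet θ n - acf θ n * bet θ (n+1)) := by ring

lemma invariant (hθ : Irrational θ) (n : ℕ) :
    (qc θ (n + 1) : ℝ) * bet θ n + qc θ n * bet θ (n + 1) = 1 := by
  induction n with
  | zero => simp [qc_zero, qc_one, bet_zero]
  | succ n ih =>
    rw [qc_rec, bet_rec hθ]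
    push_cast
    nlinarith [ih]

lemma det_identity (n : ℕ) :
    pc θ n * qc θ (n + 1) - qc θ n * pc θ (n + 1) = (-1 : ℤ) ^ n := by
  induction n with
  | zero => simp [pc_zero, pc_one, qc_zero, qc_one]
  | succ n ih =>
    rw [pc_rec, qc_rec]
    ring_nf
    ring_nf at ih
    linarith [ih]

lemma qc_pos (hθ : Irrational θ) (n : ℕ) :
    0 ≤ qc θ n ∧ 1 ≤ qc θ (n + 1) := by
  induction n with
  | zero => simp [qc_zero, qc_one]
  | succ n ih =>
    refine ⟨le_trans zero_le_one ih.2, ?_⟩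
    rw [qc_rec]
    nlinarith [acf_one_le hθ n, ih.1, ih.2]

lemma qc_nonneg (hθ : Irrational θ) (n : ℕ) : 0 ≤ qc θ n := (qc_pos hθ n).1
lemma qc_one_le (hθ : Irrational θ) (n : ℕ) : 1 ≤ qc θ (n + 1) := (qc_pos hθ n).2

lemma qc_mono (hθ : Irrational θ) (n : ℕ) : qc θ (n + 1) ≤ qc θ (n + 2) := by
  rw [qc_rec]
  nlinarith [acf_one_le hθ n, qc_nonneg hθ n, qc_one_le hθ n]

lemma qc_mono' (hθ : Irrational θ) : ∀ {a b : ℕ}, a ≤ b → qc θ (a+1) ≤ qc θ (b+1) := by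
  intro a b hab
  induction b with
  | zero => simp [Nat.le_zero.mp hab]
  | succ b ih =>
    rcases Nat.lt_or_ge a (b+1) with h | h
    · exact le_trans (ih (by omega)) (qc_mono hθ b)
    · have : a = b + 1 := le_antisymm hab h
      simp [this]

lemma qc_ge (hθ : Irrational θ) (n : ℕ) : (n : ℤ) ≤ qc θ (n + 1) := by
  induction n using Nat.strong_induction_on with
  | _ n ih =>
    match n with
    | 0 => simp [qc_one]
    | 1 => simpa using qc_one_le hθ 1
    | (n+2) =>
      have h1 := ih (n+1) (by omega)
      have h2 : (1:ℤ) ≤ qc θ (n+1) := qc_one_le hθ n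
      rw [qc_rec]
      have := acf_one_le hθ (n+1)
      have hq := qc_one_le hθ (n+1)
      push_cast at h1 ⊢
      nlinarith [mul_le_mul_of_nonneg_right (acf_one_le hθ (n+1)) (le_trans zero_le_one (qc_one_le hθ (n+1)))]

/-- Best approximation property. -/
lemma best_approx (hθ : Irrational θ) (n : ℕ) (Q P : ℤ)
    (hQ1 : 1 ≤ Q) (hQn : Q < qc θ (n + 1)) :
    bet θ n ≤ |(Q : ℝ) * Int.fract θ - P| := by
  set X : ℤ := (-1)^n * (qc θ (n+1) * P - pc θ (n+1) * Q) with hX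
  set Y : ℤ := (-1)^n * (pc θ n * Q - qc θ n * P) with hY
  have hsq : ((-1:ℤ))^n * ((-1:ℤ))^n = 1 := by
    rcases Nat.even_or_odd n with h | h
    · rw [h.neg_one_pow]; ring
    · rw [h.neg_one_pow]; ring
  have hdet := det_identity (θ := θ) n
  have hQeq : Q = X * qc θ n + Y * qc θ (n+1) := by
    have : X * qc θ n + Y * qc θ (n+1)
        = ((-1:ℤ))^n * (Q * (pc θ n * qc θ (n + 1) - qc θ n * pc θ (n + 1))) := by
      rw [hX, hY]; ring
    rw [this, hdet, ← mul_assoc, mul_comm (((-1:ℤ))^n) Q, mul_assoc, hsq, mul_one]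
  have hPeq : P = X * pc θ n + Y * pc θ (n+1) := by
    have : X * pc θ n + Y * pc θ (n+1)
        = ((-1:ℤ))^n * (P * (pc θ n * qc θ (n + 1) - qc θ n * pc θ (n + 1))) := by
      rw [hX, hY]; ring
    rw [this, hdet, ← mul_assoc, mul_comm (((-1:ℤ))^n) P, mul_assoc, hsq, mul_one]
  have hk0 := key_identity hθ n
  have hk1 := key_identity hθ (n+1)
  have habs : |(Q : ℝ) * Int.fract θ - P| = |(X:ℝ) * bet θ n - Y * bet θ (n+1)| := by
    have : (Q : ℝ) * Int.fract θ - P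
        = -((X:ℝ) * ((pc θ n : ℝ) - qc θ n * Int.fract θ)
            + (Y:ℝ) * ((pc θ (n+1) : ℝ) - qc θ (n+1) * Int.fract θ)) := by
      rw [hQeq, hPeq]; push_cast; ring
    rw [this, hk0, hk1, abs_neg]
    rcases Nat.even_or_odd n with h | h
    · rw [h.neg_one_pow]
      have : ((-1:ℝ))^(n+1) = -1 := by
        rw [pow_succ, h.neg_one_pow]; ring
      rw [this]
      rw [show (X:ℝ) * (1 * bet θ n) + (Y:ℝ) * (-1 * bet θ (n+1))
            = (X:ℝ) * bet θ n - Y * bet θ (n+1) by ring]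
    · rw [h.neg_one_pow]
      have : ((-1:ℝ))^(n+1) = 1 := by
        rw [pow_succ, h.neg_one_pow]; ring
      rw [this]
      rw [show (X:ℝ) * (-1 * bet θ n) + (Y:ℝ) * (1 * bet θ (n+1))
            = -((X:ℝ) * bet θ n - Y * bet θ (n+1)) by ring, abs_neg]
  rw [habs]
  have hbn := bet_pos hθ n
  have hbn1 := bet_pos hθ (n+1)
  have hblt := bet_succ_lt hθ n
  have hqn := qc_nonneg hθ n
  have hqn1 := qc_one_le hθ n
  -- case analysis on signs of X and Y
  rcases lt_trichotomy Y 0 with hYs | hYs | hYs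
  · rcases lt_trichotomy X 0 with hXs | hXs | hXs
    · -- X < 0, Y < 0 : Q ≤ -1, contradiction
      exfalso
      have : Q ≤ -1 := by
        rw [hQeq]
        have h1 : X * qc θ n ≤ 0 := mul_nonpos_of_nonpos_of_nonneg hXs.le hqn
        have h2 : Y * qc θ (n+1) ≤ -1 := by nlinarith
        linarith
      omega
    · -- X = 0, Y < 0 : Q < 0 contradiction
      exfalso
      rw [hQeq, hXs] at hQ1
      nlinarith
    · -- X > 0, Y < 0 : value ≥ X bet n ≥ bet n
      have hX1 : (1:ℝ) ≤ (X:ℝ) := by exact_mod_cast hXs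
      have hY0 : (Y:ℝ) ≤ 0 := by exact_mod_cast hYs.le
      have : bet θ n ≤ (X:ℝ) * bet θ n - Y * bet θ (n+1) := by nlinarith
      calc bet θ n ≤ (X:ℝ) * bet θ n - Y * bet θ (n+1) := this
        _ ≤ |(X:ℝ) * bet θ n - Y * bet θ (n+1)| := le_abs_self _
  · -- Y = 0 : X ≥ 1 and qc n ≥ 1
    have hXpos : 1 ≤ X := by
      rcases le_or_gt 1 X with h | h
      · exact h
      · exfalso
        have hX0 : X ≤ 0 := by omega
        rw [hQeq, hYs] at hQ1
        nlinarith
    have hX1 : (1:ℝ) ≤ (X:ℝ) := by exact_mod_cast hXpos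
    have : bet θ n ≤ (X:ℝ) * bet θ n - Y * bet θ (n+1) := by
      rw [hYs]; push_cast; nlinarith
    calc bet θ n ≤ (X:ℝ) * bet θ n - Y * bet θ (n+1) := this
      _ ≤ |(X:ℝ) * bet θ n - Y * bet θ (n+1)| := le_abs_self _
  · rcases lt_trichotomy X 0 with hXs | hXs | hXs
    · -- X < 0, Y > 0 : value ≤ -bet n
      have hX1 : (X:ℝ) ≤ -1 := by
        have : X ≤ -1 := by omega
        exact_mod_cast this
      have hY1 : (1:ℝ) ≤ (Y:ℝ) := by exact_mod_cast hYs
      have : (X:ℝ) * bet θ n - Y * bet θ (n+1) ≤ -bet θ n := by nlinarith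
      calc bet θ n ≤ -((X:ℝ) * bet θ n - Y * bet θ (n+1)) := by linarith
        _ ≤ |(X:ℝ) * bet θ n - Y * bet θ (n+1)| := neg_le_abs _
    · -- X = 0, Y > 0 : Q ≥ qc (n+1) contradiction
      exfalso
      rw [hQeq, hXs] at hQn
      nlinarith
    · -- X > 0, Y > 0 : Q ≥ qc (n+1) contradiction
      exfalso
      rw [hQeq] at hQn
      nlinarith

noncomputable def pdt (θ : ℝ) (n : ℕ) : ℤ := pc θ n + qc θ n * ⌊θ⌋

lemma approx_eq (hθ : Irrational θ) (n : ℕ) :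
    |(qc θ n : ℝ) * θ - pdt θ n| = bet θ n := by
  have h : (qc θ n : ℝ) * θ - pdt θ n = -((pc θ n : ℝ) - qc θ n * Int.fract θ) := by
    rw [pdt, Int.fract]; push_cast; ring
  rw [h, abs_neg, key_identity hθ n]
  rcases Nat.even_or_odd n with h | h
  · rw [h.neg_one_pow, one_mul, abs_of_pos (bet_pos hθ n)]
  · rw [h.neg_one_pow, neg_one_mul, abs_neg, abs_of_pos (bet_pos hθ n)]

lemma best_approx' (hθ : Irrational θ) (n : ℕ) (Q P : ℤ)
    (hQ1 : 1 ≤ Q) (hQn : Q < qc θ (n + 1)) :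
    bet θ n ≤ |(Q : ℝ) * θ - P| := by
  have h := best_approx hθ n Q (P - Q * ⌊θ⌋) hQ1 hQn
  push_cast at h
  have : (Q : ℝ) * Int.fract θ - ((P:ℝ) - (Q:ℝ) * (⌊θ⌋:ℝ)) = (Q : ℝ) * θ - P := by
    rw [Int.fract]; push_cast; ring
  rwa [this] at h

lemma coprime_pq (hθ : Irrational θ) (n : ℕ) : IsCoprime (pc θ (n+1)) (qc θ (n+1)) := by
  have hdet := det_identity (θ := θ) n
  refine ⟨(-1)^n * (- qc θ n), (-1)^n * pc θ n, ?_⟩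
  have hsq : ((-1:ℤ))^n * ((-1:ℤ))^n = 1 := by
    rcases Nat.even_or_odd n with h | h
    · rw [h.neg_one_pow]; ring
    · rw [h.neg_one_pow]; ring
  calc (-1:ℤ)^n * (- qc θ n) * pc θ (n+1) + (-1)^n * pc θ n * qc θ (n+1)
      = (-1:ℤ)^n * (pc θ n * qc θ (n + 1) - qc θ n * pc θ (n + 1)) := by ring
    _ = (-1:ℤ)^n * (-1:ℤ)^n := by rw [hdet]
    _ = 1 := hsq

lemma coprime_pdt (hθ : Irrational θ) (n : ℕ) : IsCoprime (pdt θ (n+1)) (qc θ (n+1)) := by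
  rw [pdt]
  exact (coprime_pq hθ n).add_mul_left_left ⌊θ⌋

/-- Legendre-type theorem: a sufficiently good reduced approximation is a convergent. -/
lemma legendre {y : ℝ} (hy : Irrational y) (P Q : ℤ) (hQ : 1 ≤ Q)
    (hcop : IsCoprime P Q) (happrox : 2 * (Q:ℝ) * |(Q:ℝ) * y - P| < 1) :
    ∃ j : ℕ, 1 ≤ j ∧ qc y j = Q ∧ pdt y j = P := by
  set Pr : ℕ → Prop := fun j => qc y j ≤ Q with hPr
  have hPr1 : Pr 1 := by rw [hPr]; simpa [qc_one] using hQ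
  set N : ℕ := Q.toNat with hN
  have hQN : (N : ℤ) = Q := Int.toNat_of_nonneg (by omega)
  set j : ℕ := Nat.findGreatest Pr (N + 2) with hj
  have hjb : j ≤ N + 2 := Nat.findGreatest_le _
  have hj1 : 1 ≤ j := Nat.le_findGreatest (by omega) hPr1
  have hPrj : Pr j := Nat.findGreatest_spec (m := 1) (by omega) hPr1
  have hPrN2 : ¬ Pr (N + 2) := by
    have hlt : Q < qc y (N + 2) :=
      calc Q < (N : ℤ) + 1 := by omega
        _ ≤ qc y (N + 2) := by exact_mod_cast qc_ge hy (N + 1)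
    exact not_le.mpr hlt
  have hjlt : j < N + 2 := lt_of_le_of_ne hjb (fun h => hPrN2 (h ▸ hPrj))
  have hnext : Q < qc y (j + 1) := by
    have h := Nat.findGreatest_is_greatest (lt_add_one j) (by omega : j + 1 ≤ N + 2)
    exact not_le.mp h
  have hPrj' : qc y j ≤ Q := hPrj
  clear_value j
  have hba : bet y j ≤ |(Q:ℝ) * y - P| := best_approx' hy j Q P hQ hnext
  have hQpos : (0:ℝ) < Q := by exact_mod_cast hQ
  by_contra hcon
  push_neg at hcon
  -- the integer P * qc y j - pdt y j * Q is nonzero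
  have hD : P * qc y j - pdt y j * Q ≠ 0 := by
    intro h0
    have heq : P * qc y j = pdt y j * Q := by omega
    obtain ⟨j', rfl⟩ : ∃ j', j = j' + 1 := ⟨j - 1, by omega⟩
    have hqj1 : 1 ≤ qc y (j' + 1) := qc_one_le hy j'
    have hQdvd : Q ∣ qc y (j' + 1) :=
      (hcop.symm).dvd_of_dvd_mul_left
        ⟨pdt y (j' + 1), by linear_combination heq⟩
    have hqdvd : qc y (j' + 1) ∣ Q :=
      ((coprime_pdt hy j').symm).dvd_of_dvd_mul_left
        ⟨P, by linear_combination - heq⟩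
    have hQeq : qc y (j' + 1) = Q := Int.dvd_antisymm (by omega) (by omega) hqdvd hQdvd
    have h2 : P * Q = pdt y (j' + 1) * Q := by linear_combination heq - P * hQeq
    have hPeq : pdt y (j' + 1) = P := (mul_right_cancel₀ (by omega) h2).symm
    exact hcon (j' + 1) (by omega) hQeq hPeq
  have hD1 : (1:ℝ) ≤ |(P : ℝ) * qc y j - pdt y j * Q| := by
    have : 1 ≤ |P * qc y j - pdt y j * Q| := Int.one_le_abs hD
    calc (1:ℝ) ≤ ((|P * qc y j - pdt y j * Q| : ℤ) : ℝ) := by exact_mod_cast this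
      _ = |(P : ℝ) * qc y j - pdt y j * Q| := by push_cast [Int.cast_abs]; ring_nf
  -- but it is small
  have hsplit : (P : ℝ) * qc y j - pdt y j * Q
      = (qc y j : ℝ) * ((P:ℝ) - Q * y) + (Q:ℝ) * ((qc y j : ℝ) * y - pdt y j) := by ring
  have hqjQ : (qc y j : ℝ) ≤ (Q:ℝ) := by exact_mod_cast hPrj'
  have hqj0 : (0:ℝ) ≤ (qc y j : ℝ) := by exact_mod_cast qc_nonneg hy j
  have hbnd : |(P : ℝ) * qc y j - pdt y j * Q| < 1 := by
    rw [hsplit]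
    calc |(qc y j : ℝ) * ((P:ℝ) - Q * y) + (Q:ℝ) * ((qc y j : ℝ) * y - pdt y j)|
        ≤ |(qc y j : ℝ) * ((P:ℝ) - Q * y)| + |(Q:ℝ) * ((qc y j : ℝ) * y - pdt y j)| :=
          abs_add_le _ _
      _ = (qc y j : ℝ) * |(Q:ℝ) * y - P| + (Q:ℝ) * bet y j := by
          rw [abs_mul, abs_mul, abs_of_nonneg hqj0, abs_of_pos hQpos, ← abs_neg ((P:ℝ) - Q*y),
            approx_eq hy j]
          ring_nf
      _ ≤ (Q:ℝ) * |(Q:ℝ) * y - P| + (Q:ℝ) * |(Q:ℝ) * y - P| := by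
          have := abs_nonneg ((Q:ℝ) * y - P)
          have h2 : (Q:ℝ) * bet y j ≤ (Q:ℝ) * |(Q:ℝ) * y - P| :=
            mul_le_mul_of_nonneg_left hba (le_of_lt hQpos)
          nlinarith
      _ = 2 * (Q:ℝ) * |(Q:ℝ) * y - P| := by ring
      _ < 1 := happrox
  linarith

lemma bet_two_step (hθ : Irrational θ) (n : ℕ) : 2 * bet θ (n + 2) < bet θ n := by
  have h := bet_rec hθ n
  have h1 := bet_succ_lt hθ (n + 1)
  have h2 := bet_pos hθ (n + 1)
  have ha : (1:ℝ) ≤ acf θ n := by exact_mod_cast acf_one_le hθ n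
  nlinarith

lemma bet_le_geom (hθ : Irrational θ) (n : ℕ) :
    bet θ n ≤ 2 * ((Real.sqrt 2)⁻¹) ^ n := by
  have hv : ((Real.sqrt 2)⁻¹) ^ 2 = 1 / 2 := by
    rw [inv_pow, Real.sq_sqrt (by norm_num : (0:ℝ) ≤ 2)]
    norm_num
  induction n using Nat.strong_induction_on with
  | _ n ih =>
    match n with
    | 0 =>
      rw [bet_zero]
      norm_num
    | 1 =>
      have h1 : bet θ 1 ≤ 1 := (bet_succ_lt hθ 0).le.trans (by rw [bet_zero])
      have hs : (0:ℝ) < Real.sqrt 2 := by positivity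
      have h4 : Real.sqrt 2 ≤ 2 := (Real.sqrt_le_left (by norm_num)).mpr (by norm_num)
      have h3 : (1:ℝ) ≤ 2 * (Real.sqrt 2)⁻¹ := by
        rw [show 2 * (Real.sqrt 2)⁻¹ = 2 / Real.sqrt 2 by ring, le_div_iff₀ hs]
        linarith
      calc bet θ 1 ≤ 1 := h1
        _ ≤ 2 * (Real.sqrt 2)⁻¹ ^ 1 := by rw [pow_one]; exact h3
    | (n + 2) =>
      have hle := (bet_two_step hθ n).le
      have hn := ih n (by omega)
      calc bet θ (n + 2) ≤ bet θ n / 2 := by linarith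
        _ ≤ (2 * (Real.sqrt 2)⁻¹ ^ n) / 2 := by linarith
        _ = 2 * (Real.sqrt 2)⁻¹ ^ (n + 2) := by
          rw [pow_add, hv]; ring

lemma geom_bound {c u : ℝ} (hc : 0 ≤ c) (hu0 : 0 ≤ u) (hu : u ≤ 7/8) :
    ∑' n : ℕ, ENNReal.ofReal (c * u ^ n) ≤ ENNReal.ofReal c * 8 := by
  have h1 : ∀ n : ℕ, ENNReal.ofReal (c * u ^ n)
      = ENNReal.ofReal c * (ENNReal.ofReal u) ^ n := by
    intro n
    rw [ENNReal.ofReal_mul hc, ENNReal.ofReal_pow hu0]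
  have hinv : (1 - ENNReal.ofReal u)⁻¹ ≤ 8 := by
    have h2 : (8:ℝ≥0∞)⁻¹ ≤ 1 - ENNReal.ofReal u := by
      have h3 : ENNReal.ofReal (1 - u) ≤ 1 - ENNReal.ofReal u := by
        rw [ENNReal.ofReal_sub _ hu0]
        simp
      refine le_trans ?_ h3
      have h4 : (8:ℝ≥0∞)⁻¹ = ENNReal.ofReal (1/8) := by
        rw [ENNReal.ofReal_div_of_pos (by norm_num)]
        norm_num
      rw [h4]
      exact ENNReal.ofReal_le_ofReal (by linarith)
    calc (1 - ENNReal.ofReal u)⁻¹ ≤ ((8:ℝ≥0∞)⁻¹)⁻¹ := ENNReal.inv_le_inv.mpr h2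
      _ = 8 := by norm_num
  calc ∑' n : ℕ, ENNReal.ofReal (c * u ^ n)
      = ENNReal.ofReal c * ∑' n : ℕ, (ENNReal.ofReal u) ^ n := by
        simp_rw [h1]; exact ENNReal.tsum_mul_left
    _ = ENNReal.ofReal c * (1 - ENNReal.ofReal u)⁻¹ := by rw [ENNReal.tsum_geometric]
    _ ≤ ENNReal.ofReal c * 8 := by gcongr

lemma sqrt_two_inv_le : ((Real.sqrt 2)⁻¹ : ℝ) ≤ 7/8 := by
  have h4 : (4:ℝ)/3 ≤ Real.sqrt 2 := by
    rw [show (4:ℝ)/3 = Real.sqrt ((4/3)^2) by rw [Real.sqrt_sq]; norm_num]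
    exact Real.sqrt_le_sqrt (by norm_num)
  have hs : (0:ℝ) < Real.sqrt 2 := by positivity
  rw [inv_le_comm₀ hs (by norm_num)]
  linarith

lemma sum_bet_le (hθ : Irrational θ) :
    ∑' n : ℕ, ENNReal.ofReal (bet θ n) ≤ 16 := by
  calc ∑' n : ℕ, ENNReal.ofReal (bet θ n)
      ≤ ∑' n : ℕ, ENNReal.ofReal (2 * ((Real.sqrt 2)⁻¹) ^ n) :=
        ENNReal.tsum_le_tsum fun n => ENNReal.ofReal_le_ofReal (bet_le_geom hθ n)
    _ ≤ ENNReal.ofReal 2 * 8 := geom_bound (by norm_num) (by positivity) sqrt_two_inv_le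
    _ = 16 := by
        rw [ENNReal.ofReal_ofNat]
        norm_num

lemma xlog_le {x : ℝ} (hx : 0 < x) : x * Real.log (1 / x) ≤ 2 * Real.sqrt x := by
  have hs : 0 < Real.sqrt x := Real.sqrt_pos.mpr hx
  have h1 : Real.log (1 / x) = 2 * Real.log (1 / Real.sqrt x) := by
    rw [show 1 / x = (1 / Real.sqrt x) ^ 2 by rw [div_pow, one_pow, Real.sq_sqrt hx.le],
      Real.log_pow]
    push_cast; ring
  have h2 : Real.log (1 / Real.sqrt x) ≤ 1 / Real.sqrt x :=
    le_trans (Real.log_le_sub_one_of_pos (by positivity)) (by linarith)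
  have h5 : Real.log (1 / x) ≤ 2 / Real.sqrt x := by
    rw [h1, show (2:ℝ) / Real.sqrt x = 2 * (1 / Real.sqrt x) by ring]
    linarith
  have h3 : x * Real.log (1 / x) ≤ x * (2 / Real.sqrt x) :=
    mul_le_mul_of_nonneg_left h5 hx.le
  calc x * Real.log (1 / x) ≤ x * (2 / Real.sqrt x) := h3
    _ = 2 * (x / Real.sqrt x) := by ring
    _ = 2 * Real.sqrt x := by rw [Real.div_sqrt]

lemma sqrt_pow_aux (x : ℝ) (hx : 0 ≤ x) : ∀ n : ℕ, Real.sqrt (x ^ n) = Real.sqrt x ^ n := by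
  intro n
  induction n with
  | zero => simp
  | succ n ih => rw [pow_succ, pow_succ, Real.sqrt_mul (by positivity), ih]

lemma sqrt_bet_le (hθ : Irrational θ) (n : ℕ) :
    2 * Real.sqrt (bet θ n) ≤ 3 * (Real.sqrt ((Real.sqrt 2)⁻¹)) ^ n := by
  have h1 : Real.sqrt (bet θ n) ≤ Real.sqrt (2 * ((Real.sqrt 2)⁻¹) ^ n) :=
    Real.sqrt_le_sqrt (bet_le_geom hθ n)
  have h2 : Real.sqrt (2 * ((Real.sqrt 2)⁻¹) ^ n)
      = Real.sqrt 2 * (Real.sqrt ((Real.sqrt 2)⁻¹)) ^ n := by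
    rw [Real.sqrt_mul (by norm_num), sqrt_pow_aux _ (by positivity)]
  have h3 : Real.sqrt 2 ≤ 3/2 := by
    rw [show (3:ℝ)/2 = Real.sqrt ((3/2)^2) by rw [Real.sqrt_sq]; norm_num]
    exact Real.sqrt_le_sqrt (by norm_num)
  have h4 : (0:ℝ) ≤ (Real.sqrt ((Real.sqrt 2)⁻¹)) ^ n := by positivity
  nlinarith [h1, h2]

lemma sqrt_sqrt_le : Real.sqrt ((Real.sqrt 2)⁻¹) ≤ 7/8 := by
  have h1 : ((Real.sqrt 2)⁻¹ : ℝ) ≤ 3/4 := by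
    have h4 : (4:ℝ)/3 ≤ Real.sqrt 2 := by
      rw [show (4:ℝ)/3 = Real.sqrt ((4/3)^2) by rw [Real.sqrt_sq]; norm_num]
      exact Real.sqrt_le_sqrt (by norm_num)
    have hs : (0:ℝ) < Real.sqrt 2 := by positivity
    rw [inv_le_comm₀ hs (by norm_num)]
    linarith
  calc Real.sqrt ((Real.sqrt 2)⁻¹) ≤ Real.sqrt (3/4) := Real.sqrt_le_sqrt h1
    _ ≤ 7/8 := by
      rw [show (7:ℝ)/8 = Real.sqrt ((7/8)^2) by rw [Real.sqrt_sq]; norm_num]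
      exact Real.sqrt_le_sqrt (by norm_num)

lemma sum_betlog_le (hθ : Irrational θ) :
    ∑' n : ℕ, ENNReal.ofReal (bet θ n * Real.log (1 / bet θ n)) ≤ 24 := by
  calc ∑' n : ℕ, ENNReal.ofReal (bet θ n * Real.log (1 / bet θ n))
      ≤ ∑' n : ℕ, ENNReal.ofReal (3 * (Real.sqrt ((Real.sqrt 2)⁻¹)) ^ n) := by
        refine ENNReal.tsum_le_tsum fun n => ENNReal.ofReal_le_ofReal ?_
        exact le_trans (xlog_le (bet_pos hθ n)) (sqrt_bet_le hθ n)
    _ ≤ ENNReal.ofReal 3 * 8 := geom_bound (by norm_num) (by positivity) sqrt_sqrt_le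
    _ = 24 := by
        rw [ENNReal.ofReal_ofNat]
        norm_num

lemma qc_le_succ (hθ : Irrational θ) (k : ℕ) : qc θ k ≤ qc θ (k + 1) := by
  cases k with
  | zero => rw [qc_zero, qc_one]; omega
  | succ k => exact qc_mono hθ k

lemma irrational_nat_mul {θ : ℝ} (hθ : Irrational θ) {m : ℕ} (hm : 1 ≤ m) :
    Irrational ((m:ℝ) * θ) := by
  have h := hθ.ratCast_mul (q := (m:ℚ)) (by exact_mod_cast Nat.one_le_iff_ne_zero.mp hm)
  simpa using h

set_option maxHeartbeats 1600000 in
lemma ess_key {θ : ℝ} (hθ : Irrational θ) {m : ℕ} (hm : 1 ≤ m) (n : ℕ)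
    (hE : 2 * (m:ℝ) * bet θ (n+1) < bet θ n) :
    ∃ j' : ℕ,
      bet θ n * Real.log (1 / bet θ (n+1)) ≤
        bet ((m:ℝ)*θ) j' * Real.log (1 / bet ((m:ℝ)*θ) (j'+1))
        + 2 * Real.sqrt (bet ((m:ℝ)*θ) (j'+1))
        + bet θ n * Real.log m ∧
      bet θ (n+1) / (qc θ (n+1) : ℝ)
        = bet ((m:ℝ)*θ) (j'+1) / ((m:ℝ) * qc ((m:ℝ)*θ) (j'+1)) := by
  set y : ℝ := (m:ℝ) * θ with hy_def
  have hy : Irrational y := irrational_nat_mul hθ hm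
  set g : ℕ := Int.gcd (m:ℤ) (qc θ (n+1)) with hg_def
  have hqc1 : 1 ≤ qc θ (n+1) := qc_one_le hθ n
  have hg1 : 1 ≤ g := by
    rcases Nat.eq_zero_or_pos g with h | h
    · exfalso
      have := Int.gcd_eq_zero_iff.mp h
      omega
    · omega
  have hgq : (g:ℤ) ∣ qc θ (n+1) := Int.gcd_dvd_right _ _
  have hgm : (g:ℤ) ∣ (m:ℤ) := Int.gcd_dvd_left _ _
  obtain ⟨Q, hQ⟩ := hgq
  obtain ⟨mg, hmg⟩ := hgm
  set P : ℤ := mg * pdt θ (n+1) with hP_def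
  have hQ1 : 1 ≤ Q := by nlinarith [hqc1, hQ]
  have hmg1 : 1 ≤ mg := by
    have hm1 : 1 ≤ (m:ℤ) := by exact_mod_cast hm
    nlinarith [hmg]
  -- coprimality of P and Q
  have hcop : IsCoprime P Q := by
    have hco1 : Nat.Coprime (pdt θ (n+1)).natAbs (qc θ (n+1)).natAbs :=
      Int.isCoprime_iff_gcd_eq_one.mp (coprime_pdt hθ n)
    have hgcd_eq : Int.gcd ((m:ℤ) * pdt θ (n+1)) (qc θ (n+1)) = g := by
      show Nat.gcd ((m:ℤ) * pdt θ (n+1)).natAbs (qc θ (n+1)).natAbs = g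
      rw [Int.natAbs_mul]
      rw [show ((m:ℤ)).natAbs = m from Int.natAbs_natCast m]
      rw [Nat.Coprime.gcd_mul_right_cancel _ hco1]
      rfl
    have hdiv := Int.gcd_div_gcd_div_gcd (i := (m:ℤ) * pdt θ (n+1)) (j := qc θ (n+1))
      (by rw [hgcd_eq]; omega)
    rw [hgcd_eq] at hdiv
    have h1 : (m:ℤ) * pdt θ (n+1) / (g:ℤ) = P := by
      rw [hmg, hP_def, mul_assoc]
      exact Int.mul_ediv_cancel_left _ (by omega)
    have h2 : qc θ (n+1) / (g:ℤ) = Q := by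
      rw [hQ]
      exact Int.mul_ediv_cancel_left _ (by omega)
    rw [h1, h2] at hdiv
    exact Int.isCoprime_iff_gcd_eq_one.mpr hdiv
  -- approximation quality
  have hb1pos := bet_pos hθ (n+1)
  have hbnpos := bet_pos hθ n
  have hgR : (0:ℝ) < (g:ℝ) := by exact_mod_cast hg1
  have hQR : (0:ℝ) < (Q:ℝ) := by exact_mod_cast hQ1
  have hmgR : (0:ℝ) < (mg:ℝ) := by exact_mod_cast hmg1
  have hmR : (0:ℝ) < (m:ℝ) := by exact_mod_cast hm
  have hgR1 : (1:ℝ) ≤ (g:ℝ) := by exact_mod_cast hg1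
  have hQR1 : (1:ℝ) ≤ (Q:ℝ) := by exact_mod_cast hQ1
  have hmgR1 : (1:ℝ) ≤ (mg:ℝ) := by exact_mod_cast hmg1
  have hqcR : (qc θ (n+1) : ℝ) = (g:ℝ) * Q := by exact_mod_cast congrArg Int.cast hQ
  have hmgRR : (m:ℝ) = (g:ℝ) * mg := by exact_mod_cast congrArg Int.cast hmg
  have happ : |(Q:ℝ) * y - P| = (mg:ℝ) * bet θ (n+1) := by
    have h1 : (Q:ℝ) * y - P = (mg:ℝ) * ((qc θ (n+1) : ℝ) * θ - pdt θ (n+1)) := by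
      rw [hy_def, hP_def, hqcR, hmgRR]
      push_cast
      ring
    rw [h1, abs_mul, abs_of_pos hmgR, approx_eq hθ (n+1)]
  have hinv : (qc θ (n+1) : ℝ) * bet θ n ≤ 1 := by
    have h := invariant hθ n
    have h1 : (0:ℝ) ≤ (qc θ n : ℝ) := by exact_mod_cast qc_nonneg hθ n
    nlinarith
  have happrox : 2 * (Q:ℝ) * |(Q:ℝ) * y - P| < 1 := by
    rw [happ]
    have h2 : (Q:ℝ) ≤ (qc θ (n+1) : ℝ) := by
      rw [hqcR]; nlinarith
    have h3 : (mg:ℝ) ≤ (m:ℝ) := by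
      rw [hmgRR]; nlinarith
    have h4 : (qc θ (n+1) : ℝ) * bet θ n ≤ 1 := hinv
    -- 2 Q mg bet₁ ≤ 2 qc m bet₁ ≤ 2 m bet₁ / bet n < 1
    have h5 : 2 * (Q:ℝ) * ((mg:ℝ) * bet θ (n+1)) ≤
        2 * (qc θ (n+1):ℝ) * ((m:ℝ) * bet θ (n+1)) := by
      rw [hqcR, hmgRR]
      have hgg : (1:ℝ) ≤ (g:ℝ) * g := by nlinarith
      nlinarith [mul_le_mul_of_nonneg_right hgg
        (by positivity : (0:ℝ) ≤ 2 * (Q:ℝ) * ((mg:ℝ) * bet θ (n+1)))]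
    have h6 : 2 * (qc θ (n+1):ℝ) * ((m:ℝ) * bet θ (n+1)) * bet θ n
        ≤ 2 * ((m:ℝ) * bet θ (n+1)) := by
      nlinarith [mul_le_mul_of_nonneg_right hinv
        (by positivity : (0:ℝ) ≤ 2 * ((m:ℝ) * bet θ (n+1)))]
    have h7 : 2 * (qc θ (n+1):ℝ) * ((m:ℝ) * bet θ (n+1)) < 1 := by
      nlinarith [h6, hE, hbnpos]
    linarith
  obtain ⟨j, hj1, hQj, hPj⟩ := legendre hy P Q hQ1 hcop happrox
  obtain ⟨j', rfl⟩ : ∃ j', j = j' + 1 := ⟨j - 1, by omega⟩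
  refine ⟨j', ?_, ?_⟩
  · -- main inequality
    have hBj : bet y (j'+1) = (mg:ℝ) * bet θ (n+1) := by
      rw [← approx_eq hy (j'+1), hQj, hPj, happ]
    have hBjpos := bet_pos hy (j'+1)
    have hBj'pos := bet_pos hy j'
    have hBjlt1 : bet y (j'+1) < 1 := bet_lt_one hy j'
    have hlogBj : 0 ≤ Real.log (1 / bet y (j'+1)) :=
      Real.log_nonneg (one_le_one_div hBjpos hBjlt1.le)
    -- log decomposition
    have hlog : Real.log (1 / bet θ (n+1))
        = Real.log (1 / bet y (j'+1)) + Real.log (mg:ℝ) := by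
      rw [← Real.log_mul (by positivity) (by positivity)]
      congr 1
      rw [hBj]
      field_simp
    have hlogmg : Real.log (mg:ℝ) ≤ Real.log (m:ℝ) := by
      apply Real.log_le_log hmgR
      rw [hmgRR]; nlinarith
    -- weight comparison
    have hbcomp : bet θ n ≤ bet y j' + bet y (j'+1) := by
      have h1 : bet θ n ≤ 1 / (qc θ (n+1) : ℝ) := by
        rw [le_div_iff₀ (by exact_mod_cast hqc1 : (0:ℝ) < (qc θ (n+1):ℝ))]
        linarith [hinv]
      have h2 : 1 / (qc θ (n+1) : ℝ) ≤ 1 / (Q:ℝ) := by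
        apply one_div_le_one_div_of_le hQR
        rw [hqcR]; nlinarith
      have hinvy := invariant hy j'
      have hqy1 : (1:ℝ) ≤ (qc y (j'+1) : ℝ) := by exact_mod_cast qc_one_le hy j'
      have hqmono : (qc y j' : ℝ) ≤ (qc y (j'+1) : ℝ) := by
        exact_mod_cast qc_le_succ hy j'
      have hqynn : (0:ℝ) ≤ (qc y j' : ℝ) := by exact_mod_cast qc_nonneg hy j'
      have h3 : 1 / (Q:ℝ) = bet y j' + ((qc y j' : ℝ) / (qc y (j'+1) : ℝ)) * bet y (j'+1) := by
        have hQj' : ((qc y (j'+1) : ℤ) : ℝ) = (Q:ℝ) := by exact_mod_cast congrArg Int.cast hQj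
        rw [← hQj']
        field_simp
        nlinarith [hinvy]
      have h4 : ((qc y j' : ℝ) / (qc y (j'+1) : ℝ)) * bet y (j'+1) ≤ bet y (j'+1) := by
        have h5 : (qc y j' : ℝ) / (qc y (j'+1) : ℝ) ≤ 1 := by
          rw [div_le_one (by linarith)]
          linarith
        nlinarith
      calc bet θ n ≤ 1/(qc θ (n+1):ℝ) := h1
        _ ≤ 1/(Q:ℝ) := h2
        _ = bet y j' + ((qc y j' : ℝ) / (qc y (j'+1) : ℝ)) * bet y (j'+1) := h3
        _ ≤ bet y j' + bet y (j'+1) := by linarith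
    calc bet θ n * Real.log (1 / bet θ (n+1))
        = bet θ n * Real.log (1 / bet y (j'+1)) + bet θ n * Real.log (mg:ℝ) := by
          rw [hlog]; ring
      _ ≤ (bet y j' + bet y (j'+1)) * Real.log (1 / bet y (j'+1))
          + bet θ n * Real.log (m:ℝ) := by
          have t1 : bet θ n * Real.log (1 / bet y (j'+1))
              ≤ (bet y j' + bet y (j'+1)) * Real.log (1 / bet y (j'+1)) :=
            mul_le_mul_of_nonneg_right hbcomp hlogBj
          have t2 : bet θ n * Real.log (mg:ℝ) ≤ bet θ n * Real.log (m:ℝ) :=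
            mul_le_mul_of_nonneg_left hlogmg hbnpos.le
          linarith
      _ ≤ bet y j' * Real.log (1 / bet y (j'+1))
          + 2 * Real.sqrt (bet y (j'+1)) + bet θ n * Real.log (m:ℝ) := by
          have t3 : bet y (j'+1) * Real.log (1 / bet y (j'+1))
              ≤ 2 * Real.sqrt (bet y (j'+1)) := xlog_le hBjpos
          nlinarith
  · -- the injectivity signature
    have hBj : bet y (j'+1) = (mg:ℝ) * bet θ (n+1) := by
      rw [← approx_eq hy (j'+1), hQj, hPj, happ]
    have hQj' : ((qc y (j'+1) : ℤ) : ℝ) = (Q:ℝ) := by exact_mod_cast congrArg Int.cast hQj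
    rw [hBj, hQj', hqcR, hmgRR]
    field_simp

lemma sum_sqrt_le (hθ : Irrational θ) :
    ∑' n : ℕ, ENNReal.ofReal (2 * Real.sqrt (bet θ n)) ≤ 24 := by
  calc ∑' n : ℕ, ENNReal.ofReal (2 * Real.sqrt (bet θ n))
      ≤ ∑' n : ℕ, ENNReal.ofReal (3 * (Real.sqrt ((Real.sqrt 2)⁻¹)) ^ n) :=
        ENNReal.tsum_le_tsum fun n => ENNReal.ofReal_le_ofReal (sqrt_bet_le hθ n)
    _ ≤ ENNReal.ofReal 3 * 8 := geom_bound (by norm_num) (by positivity) sqrt_sqrt_le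
    _ = 24 := by rw [ENNReal.ofReal_ofNat]; norm_num

lemma sum_bet_mul_le (hθ : Irrational θ) {L : ℝ} (hL : 0 ≤ L) :
    ∑' n : ℕ, ENNReal.ofReal (bet θ n * L) ≤ ENNReal.ofReal (16 * L) := by
  have h1 : ∀ n : ℕ, ENNReal.ofReal (bet θ n * L)
      = ENNReal.ofReal L * ENNReal.ofReal (bet θ n) := by
    intro n
    rw [mul_comm (bet θ n) L, ENNReal.ofReal_mul hL]
  calc ∑' n : ℕ, ENNReal.ofReal (bet θ n * L)
      = ENNReal.ofReal L * ∑' n : ℕ, ENNReal.ofReal (bet θ n) := by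
        simp_rw [h1]; exact ENNReal.tsum_mul_left
    _ ≤ ENNReal.ofReal L * 16 := by gcongr; exact sum_bet_le hθ
    _ = ENNReal.ofReal (16 * L) := by
        rw [mul_comm (16:ℝ) L, ENNReal.ofReal_mul hL, ENNReal.ofReal_ofNat]

lemma ratio_lt (hθ : Irrational θ) {a b : ℕ} (h : a < b) :
    bet θ (b+1) / (qc θ (b+1) : ℝ) < bet θ (a+1) / (qc θ (a+1) : ℝ) := by
  have h1 : bet θ (b+1) < bet θ (a+1) := bet_strict_anti hθ (by omega)
  have h2 : (qc θ (a+1):ℝ) ≤ qc θ (b+1) := by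
    exact_mod_cast qc_mono' hθ (le_of_lt h)
  have p1 : (0:ℝ) < qc θ (a+1) := by
    have := qc_one_le hθ a
    exact_mod_cast lt_of_lt_of_le zero_lt_one (by exact_mod_cast this)
  have p2 : (0:ℝ) < qc θ (b+1) := lt_of_lt_of_le p1 h2
  have hbpos := bet_pos hθ (b+1)
  calc bet θ (b+1)/(qc θ (b+1):ℝ) ≤ bet θ (b+1)/(qc θ (a+1):ℝ) := by gcongr
    _ < bet θ (a+1)/(qc θ (a+1):ℝ) := by gcongr

/-- `Y ≤ S` termwise. -/
lemma Y_le_S (hθ : Irrational θ) :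
    ∑' n : ℕ, ENNReal.ofReal (bet θ n * Real.log (1 / gaussIter θ n))
      ≤ ∑' n : ℕ, ENNReal.ofReal (bet θ n * Real.log (1 / bet θ (n+1))) := by
  refine ENNReal.tsum_le_tsum fun n => ENNReal.ofReal_le_ofReal ?_
  have hg := gauss_pos hθ n
  have hb := bet_pos hθ n
  have hb1 := bet_pos hθ (n+1)
  have h1 : bet θ (n+1) ≤ gaussIter θ n := by
    rw [bet_succ]
    nth_rewrite 2 [← one_mul (gaussIter θ n)]
    exact mul_le_mul_of_nonneg_right (bet_le_one hθ n) hg.le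
  have h2 : Real.log (1 / gaussIter θ n) ≤ Real.log (1 / bet θ (n+1)) :=
    Real.log_le_log (by positivity) (by
      apply one_div_le_one_div_of_le hb1 h1)
  exact mul_le_mul_of_nonneg_left h2 hb.le

/-- `S ≤ Y + 24`. -/
lemma S_le_Y (hθ : Irrational θ) :
    ∑' n : ℕ, ENNReal.ofReal (bet θ n * Real.log (1 / bet θ (n+1)))
      ≤ (∑' n : ℕ, ENNReal.ofReal (bet θ n * Real.log (1 / gaussIter θ n))) + 24 := by
  have hterm : ∀ n : ℕ, ENNReal.ofReal (bet θ n * Real.log (1 / bet θ (n+1)))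
      ≤ ENNReal.ofReal (bet θ n * Real.log (1 / gaussIter θ n))
        + ENNReal.ofReal (bet θ n * Real.log (1 / bet θ n)) := by
    intro n
    have hg := gauss_pos hθ n
    have hb := bet_pos hθ n
    have heq : bet θ n * Real.log (1 / bet θ (n+1))
        = bet θ n * Real.log (1 / gaussIter θ n) + bet θ n * Real.log (1 / bet θ n) := by
      rw [← mul_add, ← Real.log_mul (by positivity) (by positivity)]
      congr 2
      rw [bet_succ]
      field_simp
    rw [heq]
    exact ENNReal.ofReal_add_le
  calc ∑' n : ℕ, ENNReal.ofReal (bet θ n * Real.log (1 / bet θ (n+1)))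
      ≤ ∑' n : ℕ, (ENNReal.ofReal (bet θ n * Real.log (1 / gaussIter θ n))
          + ENNReal.ofReal (bet θ n * Real.log (1 / bet θ n))) :=
        ENNReal.tsum_le_tsum hterm
    _ = (∑' n : ℕ, ENNReal.ofReal (bet θ n * Real.log (1 / gaussIter θ n)))
        + ∑' n : ℕ, ENNReal.ofReal (bet θ n * Real.log (1 / bet θ n)) :=
        ENNReal.tsum_add
    _ ≤ _ := add_le_add_right (sum_betlog_le hθ) _

set_option maxHeartbeats 1600000 in
lemma main_sum {θ : ℝ} (hθ : Irrational θ) {m : ℕ} (hm : 1 ≤ m) :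
    ∑' n : ℕ, ENNReal.ofReal (bet θ n * Real.log (1 / bet θ (n+1)))
      ≤ (∑' n : ℕ, ENNReal.ofReal
            (bet ((m:ℝ)*θ) n * Real.log (1 / bet ((m:ℝ)*θ) (n+1))))
        + ENNReal.ofReal (48 + 16 * Real.log (2*m) + 16 * Real.log m) := by
  have hy : Irrational ((m:ℝ)*θ) := irrational_nat_mul hθ hm
  set y : ℝ := (m:ℝ)*θ with hy_def
  have hmR : (1:ℝ) ≤ (m:ℝ) := by exact_mod_cast hm
  have hlogm : 0 ≤ Real.log (m:ℝ) := Real.log_nonneg hmR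
  have hlog2m : 0 ≤ Real.log (2*(m:ℝ)) := Real.log_nonneg (by linarith)
  set aT : ℕ → ℝ≥0∞ := fun n => ENNReal.ofReal (bet θ n * Real.log (1 / bet θ (n+1)))
    with haT
  set bT : ℕ → ℝ≥0∞ := fun k => ENNReal.ofReal (bet y k * Real.log (1 / bet y (k+1)))
    with hbT
  set E : Set ℕ := {n | 2 * (m:ℝ) * bet θ (n+1) < bet θ n} with hE
  -- split the sum
  have hsplit : ∑' n : ℕ, aT n = (∑' e : E, aT e) + ∑' e : ↥Eᶜ, aT e :=
    (Summable.tsum_add_tsum_compl (s := E) ENNReal.summable ENNReal.summable).symm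
  -- part 1 : essential indices
  have hEss : ∀ e : E, ∃ j' : ℕ,
      bet θ (e:ℕ) * Real.log (1 / bet θ ((e:ℕ)+1)) ≤
        bet y j' * Real.log (1 / bet y (j'+1))
        + 2 * Real.sqrt (bet y (j'+1))
        + bet θ (e:ℕ) * Real.log m ∧
      bet θ ((e:ℕ)+1) / (qc θ ((e:ℕ)+1) : ℝ)
        = bet y (j'+1) / ((m:ℝ) * qc y (j'+1)) := fun e => ess_key hθ hm e e.2
  choose J hJ using hEss
  have hJinj : Function.Injective J := by
    intro e1 e2 h12
    have s1 := (hJ e1).2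
    have s2 := (hJ e2).2
    rw [h12] at s1
    have heq : bet θ ((e1:ℕ)+1) / (qc θ ((e1:ℕ)+1) : ℝ)
        = bet θ ((e2:ℕ)+1) / (qc θ ((e2:ℕ)+1) : ℝ) := by rw [s1, s2]
    rcases lt_trichotomy (e1:ℕ) (e2:ℕ) with h | h | h
    · exact absurd heq (ne_of_gt (ratio_lt hθ h))
    · exact Subtype.ext h
    · exact absurd heq (ne_of_lt (ratio_lt hθ h))
  have hpart1 : (∑' e : E, aT e)
      ≤ (∑' k : ℕ, bT k) + (24 + ENNReal.ofReal (16 * Real.log m)) := by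
    have hterm : ∀ e : E, aT e ≤
        bT (J e) + (ENNReal.ofReal (2 * Real.sqrt (bet y (J e + 1)))
          + ENNReal.ofReal (bet θ (e:ℕ) * Real.log m)) := by
      intro e
      calc aT e ≤ ENNReal.ofReal ((bet y (J e) * Real.log (1 / bet y (J e+1))
            + 2 * Real.sqrt (bet y (J e+1))) + bet θ (e:ℕ) * Real.log m) := by
            apply ENNReal.ofReal_le_ofReal
            have h := (hJ e).1
            linarith
        _ ≤ ENNReal.ofReal (bet y (J e) * Real.log (1 / bet y (J e+1))
              + 2 * Real.sqrt (bet y (J e+1)))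
            + ENNReal.ofReal (bet θ (e:ℕ) * Real.log m) := ENNReal.ofReal_add_le
        _ ≤ bT (J e) + (ENNReal.ofReal (2 * Real.sqrt (bet y (J e + 1)))
            + ENNReal.ofReal (bet θ (e:ℕ) * Real.log m)) := by
            rw [← add_assoc]
            exact add_le_add_left ENNReal.ofReal_add_le _
    calc (∑' e : E, aT e)
        ≤ ∑' e : E, (bT (J e) + (ENNReal.ofReal (2 * Real.sqrt (bet y (J e + 1)))
            + ENNReal.ofReal (bet θ (e:ℕ) * Real.log m))) := ENNReal.tsum_le_tsum hterm
      _ = (∑' e : E, bT (J e)) + ((∑' e : E, ENNReal.ofReal (2 * Real.sqrt (bet y (J e + 1))))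
            + ∑' e : E, ENNReal.ofReal (bet θ (e:ℕ) * Real.log m)) := by
          rw [ENNReal.tsum_add, ENNReal.tsum_add]
      _ ≤ (∑' k : ℕ, bT k) + (24 + ENNReal.ofReal (16 * Real.log m)) := by
          refine add_le_add ?_ (add_le_add ?_ ?_)
          · exact ENNReal.tsum_comp_le_tsum_of_injective hJinj bT
          · calc (∑' e : E, ENNReal.ofReal (2 * Real.sqrt (bet y (J e + 1))))
                ≤ ∑' k : ℕ, ENNReal.ofReal (2 * Real.sqrt (bet y k)) :=
                  ENNReal.tsum_comp_le_tsum_of_injective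
                    (fun e1 e2 h => hJinj (by omega))
                    (fun k => ENNReal.ofReal (2 * Real.sqrt (bet y k)))
              _ ≤ 24 := sum_sqrt_le hy
          · calc (∑' e : E, ENNReal.ofReal (bet θ (e:ℕ) * Real.log m))
                ≤ ∑' n : ℕ, ENNReal.ofReal (bet θ n * Real.log m) :=
                  ENNReal.tsum_comp_le_tsum_of_injective Subtype.val_injective
                    (fun n => ENNReal.ofReal (bet θ n * Real.log m))
              _ ≤ ENNReal.ofReal (16 * Real.log m) := sum_bet_mul_le hθ hlogm
  -- part 2 : non-essential indices
  have hpart2 : (∑' e : ↥Eᶜ, aT e) ≤ 24 + ENNReal.ofReal (16 * Real.log (2*m)) := by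
    have hterm : ∀ e : ↥Eᶜ, aT e ≤
        ENNReal.ofReal (bet θ (e:ℕ) * Real.log (1 / bet θ (e:ℕ)))
          + ENNReal.ofReal (bet θ (e:ℕ) * Real.log (2*m)) := by
      intro e
      have he : ¬ (2 * (m:ℝ) * bet θ ((e:ℕ)+1) < bet θ (e:ℕ)) := e.2
      push_neg at he
      have hb := bet_pos hθ (e:ℕ)
      have hb1 := bet_pos hθ ((e:ℕ)+1)
      have hlog : Real.log (1 / bet θ ((e:ℕ)+1))
          ≤ Real.log (2*m) + Real.log (1 / bet θ (e:ℕ)) := by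
        rw [← Real.log_mul (by positivity) (by positivity)]
        apply Real.log_le_log (by positivity)
        rw [show 2 * (m:ℝ) * (1 / bet θ (e:ℕ)) = (2*(m:ℝ)) / bet θ (e:ℕ) by ring,
          div_le_div_iff₀ hb1 hb]
        linarith
      calc aT e ≤ ENNReal.ofReal (bet θ (e:ℕ) * Real.log (1 / bet θ (e:ℕ))
            + bet θ (e:ℕ) * Real.log (2*m)) := by
            apply ENNReal.ofReal_le_ofReal
            have := mul_le_mul_of_nonneg_left hlog hb.le
            linarith [this]
        _ ≤ _ := ENNReal.ofReal_add_le
    calc (∑' e : ↥Eᶜ, aT e)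
        ≤ ∑' e : ↥Eᶜ, (ENNReal.ofReal (bet θ (e:ℕ) * Real.log (1 / bet θ (e:ℕ)))
            + ENNReal.ofReal (bet θ (e:ℕ) * Real.log (2*m))) := ENNReal.tsum_le_tsum hterm
      _ = (∑' e : ↥Eᶜ, ENNReal.ofReal (bet θ (e:ℕ) * Real.log (1 / bet θ (e:ℕ))))
            + ∑' e : ↥Eᶜ, ENNReal.ofReal (bet θ (e:ℕ) * Real.log (2*m)) :=
          ENNReal.tsum_add
      _ ≤ (∑' n : ℕ, ENNReal.ofReal (bet θ n * Real.log (1 / bet θ n)))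
            + ∑' n : ℕ, ENNReal.ofReal (bet θ n * Real.log (2*m)) := by
          refine add_le_add ?_ ?_
          · exact ENNReal.tsum_comp_le_tsum_of_injective Subtype.val_injective _
          · exact ENNReal.tsum_comp_le_tsum_of_injective Subtype.val_injective _
      _ ≤ 24 + ENNReal.ofReal (16 * Real.log (2*m)) :=
          add_le_add (sum_betlog_le hθ) (sum_bet_mul_le hθ hlog2m)
  -- combine
  calc ∑' n : ℕ, aT n = (∑' e : E, aT e) + ∑' e : ↥Eᶜ, aT e := hsplit
    _ ≤ ((∑' k : ℕ, bT k) + (24 + ENNReal.ofReal (16 * Real.log m)))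
        + (24 + ENNReal.ofReal (16 * Real.log (2*m))) := add_le_add hpart1 hpart2
    _ = (∑' k : ℕ, bT k) + ((24 + 24) + (ENNReal.ofReal (16 * Real.log m)
        + ENNReal.ofReal (16 * Real.log (2*m)))) := by ring
    _ ≤ (∑' k : ℕ, bT k)
        + ENNReal.ofReal (48 + 16 * Real.log (2*m) + 16 * Real.log m) := by
        refine add_le_add_right ?_ _
        have h48 : (24:ℝ≥0∞) + 24 = ENNReal.ofReal 48 := by
          rw [ENNReal.ofReal_ofNat]; norm_num
        rw [h48, ← ENNReal.ofReal_add (by positivity) (by positivity),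
          ← ENNReal.ofReal_add (by norm_num) (by positivity)]
        apply ENNReal.ofReal_le_ofReal
        linarith


end BrjAux

/-- There is `C > 0` such that `Y(θ) ≤ Y(mθ) + C log m` for all positive integers `m`
and all irrational `θ`. -/
theorem brjunoY_mul_bound :
    ∃ C : ℝ, 0 < C ∧ ∀ m : ℕ, 0 < m → ∀ θ : ℝ, Irrational θ →
      brjunoY θ ≤ brjunoY (m * θ) + ENNReal.ofReal (C * Real.log m) := by
  refine ⟨200, by norm_num, ?_⟩
  intro m hm θ hθ
  by_cases h1 : m = 1
  · subst h1
    simp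
  · have hm1 : 1 ≤ m := hm
    have hm2 : 2 ≤ m := by omega
    have hy : Irrational ((m:ℝ) * θ) := BrjAux.irrational_nat_mul hθ hm1
    rw [brjunoY, if_pos hθ, brjunoY, if_pos hy]
    have hYSθ : (∑' n : ℕ, ENNReal.ofReal
          ((∏ i ∈ Finset.range n, gaussIter θ i) * Real.log (1 / gaussIter θ n)))
        = ∑' n : ℕ, ENNReal.ofReal (BrjAux.bet θ n * Real.log (1 / gaussIter θ n)) := rfl
    have hYSy : (∑' n : ℕ, ENNReal.ofReal
          ((∏ i ∈ Finset.range n, gaussIter ((m:ℝ)*θ) i)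
            * Real.log (1 / gaussIter ((m:ℝ)*θ) n)))
        = ∑' n : ℕ, ENNReal.ofReal
            (BrjAux.bet ((m:ℝ)*θ) n * Real.log (1 / gaussIter ((m:ℝ)*θ) n)) := rfl
    rw [hYSθ, hYSy]
    have hlogm : Real.log 2 ≤ Real.log (m:ℝ) :=
      Real.log_le_log (by norm_num) (by exact_mod_cast hm2)
    have hl2lb := Real.log_two_gt_d9
    have hl2ub := Real.log_two_lt_d9
    have hlog2m : Real.log (2 * (m:ℝ)) = Real.log 2 + Real.log (m:ℝ) :=
      Real.log_mul (by norm_num) (by positivity)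
    calc ∑' n : ℕ, ENNReal.ofReal (BrjAux.bet θ n * Real.log (1 / gaussIter θ n))
        ≤ ∑' n : ℕ, ENNReal.ofReal (BrjAux.bet θ n * Real.log (1 / BrjAux.bet θ (n+1))) :=
          BrjAux.Y_le_S hθ
      _ ≤ (∑' n : ℕ, ENNReal.ofReal
            (BrjAux.bet ((m:ℝ)*θ) n * Real.log (1 / BrjAux.bet ((m:ℝ)*θ) (n+1))))
          + ENNReal.ofReal (48 + 16 * Real.log (2*(m:ℝ)) + 16 * Real.log (m:ℝ)) :=
          BrjAux.main_sum hθ hm1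
      _ ≤ ((∑' n : ℕ, ENNReal.ofReal
            (BrjAux.bet ((m:ℝ)*θ) n * Real.log (1 / gaussIter ((m:ℝ)*θ) n))) + 24)
          + ENNReal.ofReal (48 + 16 * Real.log (2*(m:ℝ)) + 16 * Real.log (m:ℝ)) :=
          add_le_add_left (BrjAux.S_le_Y hy) _
      _ = (∑' n : ℕ, ENNReal.ofReal
            (BrjAux.bet ((m:ℝ)*θ) n * Real.log (1 / gaussIter ((m:ℝ)*θ) n)))
          + (24 + ENNReal.ofReal (48 + 16 * Real.log (2*(m:ℝ)) + 16 * Real.log (m:ℝ))) := by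
          ring
      _ ≤ (∑' n : ℕ, ENNReal.ofReal
            (BrjAux.bet ((m:ℝ)*θ) n * Real.log (1 / gaussIter ((m:ℝ)*θ) n)))
          + ENNReal.ofReal (200 * Real.log (m:ℝ)) := by
          refine add_le_add_right ?_ _
          have h24 : (24:ℝ≥0∞) = ENNReal.ofReal 24 := by
            rw [ENNReal.ofReal_ofNat]
          rw [h24, ← ENNReal.ofReal_add (by norm_num) (by rw [hlog2m]; linarith)]
          apply ENNReal.ofReal_le_ofReal
          rw [hlog2m]
          linarith
end

section
/- For every positive integer m there is a constant C_m such that for all irrational θ, Y(mθ) ≤ m·Y(θ) + C_m, where Y is the Yoccoz–Brjuno function. -/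
open scoped ENNReal
open Classical

set_option linter.unusedSectionVars false

namespace BJ

variable (ξ : ℝ)

/-- β_{n-1}: product of first n gauss iterates. -/
noncomputable def B (n : ℕ) : ℝ := ∏ i ∈ Finset.range n, gaussIter ξ i

/-- partial quotient a_{n+1} -/
noncomputable def A (n : ℕ) : ℤ := ⌊1 / gaussIter ξ n⌋

noncomputable def qp : ℕ → ℤ × ℤ
  | 0 => (0, 1)
  | n + 1 => ((qp n).2, A ξ n * (qp n).2 + (qp n).1)

noncomputable def pp : ℕ → ℤ × ℤ
  | 0 => (1, 0)
  | n + 1 => ((pp n).2, A ξ n * (pp n).2 + (pp n).1)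

noncomputable def q (n : ℕ) : ℤ := (qp ξ n).2
noncomputable def qm (n : ℕ) : ℤ := (qp ξ n).1
noncomputable def p (n : ℕ) : ℤ := (pp ξ n).2
noncomputable def pm (n : ℕ) : ℤ := (pp ξ n).1

lemma q_zero : q ξ 0 = 1 := rfl
lemma qm_zero : qm ξ 0 = 0 := rfl
lemma p_zero : p ξ 0 = 0 := rfl
lemma pm_zero : pm ξ 0 = 1 := rfl
lemma qm_succ (n : ℕ) : qm ξ (n+1) = q ξ n := rfl
lemma pm_succ (n : ℕ) : pm ξ (n+1) = p ξ n := rfl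
lemma q_succ (n : ℕ) : q ξ (n+1) = A ξ n * q ξ n + qm ξ n := rfl
lemma p_succ (n : ℕ) : p ξ (n+1) = A ξ n * p ξ n + pm ξ n := rfl

variable {ξ}
variable (hξ : Irrational ξ)

section basic
include hξ

lemma t_irr : ∀ n, Irrational (gaussIter ξ n) := by
  intro n
  induction n with
  | zero =>
    have : Int.fract ξ = ξ - ⌊ξ⌋ := rfl
    rw [show gaussIter ξ 0 = Int.fract ξ from rfl, this]
    exact hξ.sub_intCast _
  | succ n ih =>
    have h1 : Irrational (1 / gaussIter ξ n) := by
      rw [one_div]; exact ih.inv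
    have : Int.fract (1 / gaussIter ξ n) = 1 / gaussIter ξ n - ⌊1 / gaussIter ξ n⌋ := rfl
    rw [show gaussIter ξ (n+1) = Int.fract (1 / gaussIter ξ n) from rfl, this]
    exact h1.sub_intCast _

lemma t_pos (n : ℕ) : 0 < gaussIter ξ n := by
  have h := t_irr hξ n
  cases n with
  | zero =>
    exact (Int.fract_pos).2 (hξ.ne_int _)
  | succ n =>
    have h1 : Irrational (1 / gaussIter ξ n) := by
      rw [one_div]; exact (t_irr hξ n).inv
    exact (Int.fract_pos).2 (h1.ne_int _)

omit hξ in
lemma t_lt_one (n : ℕ) : gaussIter ξ n < 1 := by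
  cases n with
  | zero => exact Int.fract_lt_one _
  | succ n => exact Int.fract_lt_one _

omit hξ in
lemma t_succ (n : ℕ) : gaussIter ξ (n+1) = (gaussIter ξ n)⁻¹ - A ξ n := by
  show Int.fract (1 / gaussIter ξ n) = _
  rw [Int.fract, A, one_div]

lemma A_ge_one (n : ℕ) : 1 ≤ A ξ n := by
  rw [A, Int.le_floor]
  rw [le_one_div (by norm_num) (t_pos hξ n)]
  simpa using (t_lt_one (ξ:=ξ) n).le

end basic

section basic2
include hξ

lemma B_zero : B ξ 0 = 1 := by simp [B]

omit hξ in
lemma B_succ (n : ℕ) : B ξ (n+1) = B ξ n * gaussIter ξ n := Finset.prod_range_succ _ _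

lemma B_pos (n : ℕ) : 0 < B ξ n := Finset.prod_pos fun i _ => t_pos hξ i

lemma B_le_one (n : ℕ) : B ξ n ≤ 1 :=
  Finset.prod_le_one (fun i _ => (t_pos hξ i).le) (fun i _ => (t_lt_one (ξ:=ξ) i).le)

lemma B_succ_le (n : ℕ) : B ξ (n+1) ≤ B ξ n := by
  rw [B_succ]
  nlinarith [B_pos hξ n, t_pos hξ n, t_lt_one (ξ:=ξ) n]

lemma B_anti : Antitone (B ξ) := antitone_nat_of_succ_le (B_succ_le hξ)

lemma B_rec (n : ℕ) : B ξ (n+2) = B ξ n - A ξ n * B ξ (n+1) := by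
  have h0 : gaussIter ξ n ≠ 0 := (t_pos hξ n).ne'
  rw [B_succ, B_succ, t_succ]
  field_simp

lemma B_half (n : ℕ) : B ξ (n+2) ≤ B ξ n / 2 := by
  rcases le_or_gt (gaussIter ξ n) (1/2) with h | h
  · calc B ξ (n+2) = B ξ n * gaussIter ξ n * gaussIter ξ (n+1) := by rw [B_succ, B_succ]
      _ ≤ B ξ n * (1/2) * 1 := by
          apply mul_le_mul
          · exact mul_le_mul_of_nonneg_left h (B_pos hξ n).le
          · exact (t_lt_one (ξ:=ξ) (n+1)).le
          · exact (t_pos hξ (n+1)).le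
          · nlinarith [B_pos hξ n, t_pos hξ n]
      _ = B ξ n / 2 := by ring
  · have := B_rec hξ n
    have hA : (1:ℝ) ≤ A ξ n := by exact_mod_cast A_ge_one hξ n
    have hB1 : B ξ (n+1) = B ξ n * gaussIter ξ n := B_succ n
    nlinarith [B_pos hξ n, B_pos hξ (n+1)]

lemma q_pos_all : ∀ n, 1 ≤ q ξ n ∧ 0 ≤ qm ξ n ∧ qm ξ n ≤ q ξ n := by
  intro n
  induction n with
  | zero => refine ⟨le_refl _, le_refl _, by norm_num [q_zero, qm_zero]⟩
  | succ n ih =>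
    obtain ⟨h1, h2, h3⟩ := ih
    have hA := A_ge_one hξ n
    have hq : 1 ≤ q ξ (n+1) := by
      rw [q_succ]; nlinarith
    refine ⟨hq, ?_, ?_⟩
    · rw [qm_succ]; omega
    · rw [qm_succ, q_succ]; nlinarith

lemma q_one_le (n : ℕ) : 1 ≤ q ξ n := (q_pos_all hξ n).1
lemma qm_nonneg (n : ℕ) : 0 ≤ qm ξ n := (q_pos_all hξ n).2.1
lemma qm_le_q (n : ℕ) : qm ξ n ≤ q ξ n := (q_pos_all hξ n).2.2

lemma q_mono_succ (n : ℕ) : q ξ n ≤ q ξ (n+1) := by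
  have hA := A_ge_one hξ n
  have h1 := q_one_le hξ n
  have h2 := qm_nonneg hξ n
  rw [q_succ]; nlinarith

lemma q_mono : Monotone (q ξ) := monotone_nat_of_le_succ (q_mono_succ hξ)

lemma q_fib (n : ℕ) : q ξ n + q ξ (n+1) ≤ q ξ (n+2) := by
  have hA := A_ge_one hξ (n+1)
  have h1 := q_one_le hξ (n+1)
  rw [q_succ ξ (n+1), qm_succ]
  nlinarith

/-- Fundamental identity: β_{n-1} q_n + β_n q_{n-1} = 1. -/
lemma keyid : ∀ n, B ξ n * (q ξ n : ℝ) + B ξ (n+1) * (qm ξ n : ℝ) = 1 := by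
  intro n
  induction n with
  | zero => simp [B_zero hξ, q_zero, qm_zero]
  | succ n ih =>
    have hrec : B ξ (n+2) = B ξ n - A ξ n * B ξ (n+1) := B_rec hξ n
    rw [q_succ, qm_succ]
    push_cast
    linear_combination ih + (q ξ n : ℝ) * hrec

lemma Bq_le_one (n : ℕ) : B ξ n * (q ξ n : ℝ) ≤ 1 := by
  have := keyid hξ n
  have h1 : (0:ℝ) ≤ (qm ξ n : ℝ) := by exact_mod_cast qm_nonneg hξ n
  nlinarith [B_pos hξ (n+1)]

lemma half_le_Bq (n : ℕ) : 1/2 ≤ B ξ n * (q ξ n : ℝ) := by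
  have hid := keyid hξ n
  have h1 : B ξ (n+1) * (qm ξ n : ℝ) ≤ B ξ n * (q ξ n : ℝ) := by
    apply mul_le_mul (B_succ_le hξ n) ?_ ?_ (B_pos hξ n).le
    · exact_mod_cast qm_le_q hξ n
    · exact_mod_cast qm_nonneg hξ n
  linarith

/-- numerator/denominator error: q_n α − p_n = (−1)^n β_n, and for the shifted pair. -/
lemma Eid : ∀ n, (q ξ n : ℝ) * Int.fract ξ - (p ξ n : ℝ) = (-1)^n * B ξ (n+1) ∧
    (qm ξ n : ℝ) * Int.fract ξ - (pm ξ n : ℝ) = -((-1)^n * B ξ n) := by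
  intro n
  induction n with
  | zero =>
    constructor
    · simp [q_zero, p_zero, B_succ, B_zero hξ]
      rfl
    · simp [qm_zero, pm_zero, B_zero hξ]
  | succ n ih =>
    obtain ⟨ih1, ih2⟩ := ih
    have hrec : B ξ (n+2) = B ξ n - A ξ n * B ξ (n+1) := B_rec hξ n
    constructor
    · rw [q_succ, p_succ]
      push_cast
      calc (A ξ n * (q ξ n:ℝ) + qm ξ n) * Int.fract ξ - (A ξ n * (p ξ n:ℝ) + pm ξ n)
          = A ξ n * ((q ξ n:ℝ) * Int.fract ξ - p ξ n) + ((qm ξ n:ℝ) * Int.fract ξ - pm ξ n) := by ring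
        _ = A ξ n * ((-1)^n * B ξ (n+1)) + (-((-1)^n * B ξ n)) := by rw [ih1, ih2]
        _ = (-1)^(n+1) * B ξ (n+2) := by rw [hrec]; ring
    · rw [qm_succ, pm_succ, ih1]; ring

lemma E_abs (n : ℕ) : |(q ξ n : ℝ) * Int.fract ξ - (p ξ n : ℝ)| = B ξ (n+1) := by
  rw [(Eid hξ n).1, abs_mul, abs_pow, abs_neg, abs_one, one_pow, one_mul,
    abs_of_pos (B_pos hξ (n+1))]

lemma det : ∀ n, p ξ (n+1) * q ξ n - p ξ n * q ξ (n+1) = (-1)^n := by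
  intro n
  induction n with
  | zero => simp [p_zero, q_zero, p_succ, q_succ, pm_zero, qm_zero]
  | succ n ih =>
    rw [p_succ ξ (n+1), q_succ ξ (n+1), qm_succ, pm_succ]
    ring_nf
    ring_nf at ih
    linarith [ih]

/-- Best approximation: any P/R with 1 ≤ P < q_{n+1} approximates no better than β_n. -/
lemma best (n : ℕ) (P R : ℤ) (hP1 : 1 ≤ P) (hP2 : P < q ξ (n+1)) :
    B ξ (n+1) ≤ |(P : ℝ) * Int.fract ξ - (R : ℝ)| := by
  have hdet := det hξ n
  have hsq : ((-1:ℤ)^n) * ((-1:ℤ)^n) = 1 := by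
    rw [← pow_add, ← two_mul, pow_mul]; norm_num
  obtain ⟨u, v, huv1, huv2⟩ : ∃ u v : ℤ,
      u * q ξ n + v * q ξ (n+1) = P ∧ u * p ξ n + v * p ξ (n+1) = R := by
    refine ⟨(-1)^n * (P * p ξ (n+1) - R * q ξ (n+1)), (-1)^n * (R * q ξ n - P * p ξ n), ?_, ?_⟩
    · linear_combination ((-1:ℤ)^n * P) * hdet + P * hsq
    · linear_combination ((-1:ℤ)^n * R) * hdet + R * hsq
  have hkey : (P : ℝ) * Int.fract ξ - (R : ℝ)
      = (-1)^n * ((u : ℝ) * B ξ (n+1) - (v:ℝ) * B ξ (n+2)) := by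
    have e1 := (Eid hξ n).1
    have e2 := (Eid hξ (n+1)).1
    have hc1 : ((u:ℝ) * (q ξ n : ℝ) + (v:ℝ) * (q ξ (n+1) : ℝ)) = (P:ℝ) := by exact_mod_cast huv1
    have hc2 : ((u:ℝ) * (p ξ n : ℝ) + (v:ℝ) * (p ξ (n+1) : ℝ)) = (R:ℝ) := by exact_mod_cast huv2
    calc (P : ℝ) * Int.fract ξ - (R : ℝ)
        = ((u:ℝ) * q ξ n + v * q ξ (n+1)) * Int.fract ξ - ((u:ℝ) * p ξ n + v * p ξ (n+1)) := by
          rw [hc1, hc2]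
      _ = (u:ℝ) * ((q ξ n : ℝ) * Int.fract ξ - p ξ n) + (v:ℝ) * ((q ξ (n+1):ℝ) * Int.fract ξ - p ξ (n+1)) := by ring
      _ = (u:ℝ) * ((-1)^n * B ξ (n+1)) + (v:ℝ) * ((-1)^(n+1) * B ξ (n+2)) := by rw [e1, e2]
      _ = (-1)^n * ((u : ℝ) * B ξ (n+1) - (v:ℝ) * B ξ (n+2)) := by ring
  have habs : |(P : ℝ) * Int.fract ξ - (R : ℝ)| = |(u : ℝ) * B ξ (n+1) - (v:ℝ) * B ξ (n+2)| := by
    rw [hkey, abs_mul, abs_pow, abs_neg, abs_one, one_pow, one_mul]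
  rw [habs]
  have hB1 := B_pos hξ (n+1)
  have hB2 := B_pos hξ (n+2)
  have hq1r : (1:ℝ) ≤ (q ξ n : ℝ) := by exact_mod_cast q_one_le hξ n
  have hq2r : (1:ℝ) ≤ (q ξ (n+1) : ℝ) := by exact_mod_cast q_one_le hξ (n+1)
  rcases lt_trichotomy v 0 with hvn | hv0 | hvp
  · -- v ≤ -1 : u ≥ 1, value = u B₁ + |v| B₂ ≥ B₁
    have hu1 : 1 ≤ u := by nlinarith [q_one_le hξ n, q_one_le hξ (n+1)]
    have hur : (1:ℝ) ≤ (u:ℝ) := by exact_mod_cast hu1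
    have hvr : (v:ℝ) ≤ -1 := by exact_mod_cast (by omega : v ≤ -1)
    rw [abs_of_pos (by nlinarith)]
    nlinarith
  · subst hv0
    have hu1 : 1 ≤ u := by nlinarith [q_one_le hξ n]
    have hur : (1:ℝ) ≤ (u:ℝ) := by exact_mod_cast hu1
    rw [Int.cast_zero, zero_mul, sub_zero, abs_of_pos (by nlinarith)]
    nlinarith
  · -- v ≥ 1: u ≤ -1
    have hvr : (1:ℝ) ≤ (v:ℝ) := by exact_mod_cast hvp
    have hu1 : u ≤ -1 := by nlinarith [q_one_le hξ n, q_one_le hξ (n+1)]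
    have hur : (u:ℝ) ≤ -1 := by exact_mod_cast hu1
    rw [abs_of_neg (by nlinarith)]
    nlinarith

/-- B is bounded by a geometric sequence: B n ≤ √2 · (√2)⁻ⁿ -/
lemma B_geom : ∀ n, B ξ n ≤ Real.sqrt 2 * ((Real.sqrt 2)⁻¹)^n := by
  have hs0 : (0:ℝ) < Real.sqrt 2 := Real.sqrt_pos.2 (by norm_num)
  have hs2 : Real.sqrt 2 * (Real.sqrt 2)⁻¹ = 1 := mul_inv_cancel₀ hs0.ne'
  have hsq : (Real.sqrt 2)⁻¹ * (Real.sqrt 2)⁻¹ = 1/2 := by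
    rw [← mul_inv, Real.mul_self_sqrt (by norm_num)]; norm_num
  have key : ∀ n, B ξ n ≤ Real.sqrt 2 * ((Real.sqrt 2)⁻¹)^n ∧
      B ξ (n+1) ≤ Real.sqrt 2 * ((Real.sqrt 2)⁻¹)^(n+1) := by
    intro n
    induction n with
    | zero =>
      constructor
      · rw [B_zero hξ, pow_zero, mul_one]
        nlinarith [Real.sq_sqrt (by norm_num : (0:ℝ) ≤ 2)]
      · rw [pow_one, hs2]
        calc B ξ 1 ≤ B ξ 0 := B_succ_le hξ 0
          _ = 1 := B_zero hξ
    | succ n ih =>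
      refine ⟨ih.2, ?_⟩
      calc B ξ (n+2) ≤ B ξ n / 2 := B_half hξ n
        _ ≤ (Real.sqrt 2 * ((Real.sqrt 2)⁻¹)^n) / 2 := by linarith [ih.1]
        _ = Real.sqrt 2 * ((Real.sqrt 2)⁻¹)^(n+2) := by
            have hw : ((Real.sqrt 2)⁻¹:ℝ)^(n+2) = ((Real.sqrt 2)⁻¹)^n * (1/2) := by
              rw [pow_succ, pow_succ, mul_assoc, hsq]
            rw [hw]; ring
  exact fun n => (key n).1

/-- q grows geometrically: (√2)ⁿ ≤ √2 · q n. -/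
lemma q_geom : ∀ n, (Real.sqrt 2)^n ≤ Real.sqrt 2 * (q ξ n : ℝ) := by
  have hs0 : (0:ℝ) < Real.sqrt 2 := Real.sqrt_pos.2 (by norm_num)
  have hsq : Real.sqrt 2 * Real.sqrt 2 = 2 := Real.mul_self_sqrt (by norm_num)
  have key : ∀ n, (Real.sqrt 2)^n ≤ Real.sqrt 2 * (q ξ n : ℝ) ∧
      (Real.sqrt 2)^(n+1) ≤ Real.sqrt 2 * (q ξ (n+1) : ℝ) := by
    intro n
    induction n with
    | zero =>
      have h1 : (1:ℝ) ≤ (q ξ 1 : ℝ) := by exact_mod_cast q_one_le hξ 1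
      constructor
      · rw [pow_zero, q_zero]
        push_cast
        nlinarith [Real.sq_sqrt (by norm_num : (0:ℝ) ≤ 2), Real.sqrt_nonneg 2]
      · rw [pow_one]
        nlinarith [Real.sqrt_nonneg 2]
    | succ n ih =>
      refine ⟨ih.2, ?_⟩
      have hfib : (q ξ n : ℝ) + (q ξ (n+1) : ℝ) ≤ (q ξ (n+2) : ℝ) := by
        exact_mod_cast q_fib hξ n
      have hq1 : (1:ℝ) ≤ (q ξ n : ℝ) := by exact_mod_cast q_one_le hξ n
      have hmono : (q ξ n : ℝ) ≤ (q ξ (n+1) : ℝ) := by exact_mod_cast q_mono_succ hξ n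
      calc (Real.sqrt 2)^(n+2) = 2 * (Real.sqrt 2)^n := by
            rw [pow_succ, pow_succ, mul_assoc, hsq]; ring
        _ ≤ 2 * (Real.sqrt 2 * (q ξ n : ℝ)) := by nlinarith [ih.1]
        _ = Real.sqrt 2 * (2 * (q ξ n : ℝ)) := by ring
        _ ≤ Real.sqrt 2 * (q ξ (n+2) : ℝ) := by nlinarith
  exact fun n => (key n).1

omit hξ in
lemma sqrt2_inv_le : (Real.sqrt 2)⁻¹ ≤ (0.85 : ℝ) := by
  have hs0 : (0:ℝ) < Real.sqrt 2 := Real.sqrt_pos.2 (by norm_num)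
  have hsq : Real.sqrt 2 * Real.sqrt 2 = 2 := Real.mul_self_sqrt (by norm_num)
  rw [inv_le_comm₀ hs0 (by norm_num)]
  nlinarith

lemma sqrt2_le : Real.sqrt 2 ≤ (1.5:ℝ) := by
  nlinarith [Real.sq_sqrt (by norm_num : (0:ℝ) ≤ 2), Real.sqrt_nonneg 2]

omit hξ in
lemma sqrt2_inv_le' : (Real.sqrt 2)⁻¹ ≤ (0.7225 : ℝ) := by
  have hs0 : (0:ℝ) < Real.sqrt 2 := Real.sqrt_pos.2 (by norm_num)
  rw [inv_le_comm₀ hs0 (by norm_num)]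
  nlinarith [Real.sq_sqrt (by norm_num : (0:ℝ) ≤ 2)]

lemma invq_le_geom (n : ℕ) : ((q ξ n : ℝ))⁻¹ ≤ 1.5 * (0.85:ℝ)^n := by
  have hs0 : (0:ℝ) < Real.sqrt 2 := Real.sqrt_pos.2 (by norm_num)
  have hs2 : Real.sqrt 2 * (Real.sqrt 2)⁻¹ = 1 := mul_inv_cancel₀ hs0.ne'
  have hq0 : (0:ℝ) < (q ξ n : ℝ) := by
    have := q_one_le hξ n; exact_mod_cast lt_of_lt_of_le zero_lt_one (by exact_mod_cast this)
  have h := q_geom hξ n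
  have h3 : (1:ℝ) ≤ (Real.sqrt 2 * ((Real.sqrt 2)⁻¹)^n) * (q ξ n : ℝ) := by
    have hmul := mul_le_mul_of_nonneg_right h (by positivity : (0:ℝ) ≤ ((Real.sqrt 2)⁻¹)^n)
    calc (1:ℝ) = (Real.sqrt 2 * (Real.sqrt 2)⁻¹)^n := by rw [hs2, one_pow]
      _ = (Real.sqrt 2)^n * ((Real.sqrt 2)⁻¹)^n := mul_pow _ _ _
      _ ≤ Real.sqrt 2 * (q ξ n : ℝ) * ((Real.sqrt 2)⁻¹)^n := hmul
      _ = (Real.sqrt 2 * ((Real.sqrt 2)⁻¹)^n) * (q ξ n : ℝ) := by ring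
  have h4 : ((q ξ n:ℝ))⁻¹ ≤ Real.sqrt 2 * ((Real.sqrt 2)⁻¹)^n := by
    have := mul_le_mul_of_nonneg_right h3 (inv_nonneg.2 hq0.le)
    rwa [one_mul, mul_assoc, mul_inv_cancel₀ hq0.ne', mul_one] at this
  calc ((q ξ n:ℝ))⁻¹ ≤ Real.sqrt 2 * ((Real.sqrt 2)⁻¹)^n := h4
    _ ≤ 1.5 * (0.85:ℝ)^n := by
        apply mul_le_mul (sqrt2_le hξ) ?_ (by positivity) (by norm_num)
        exact pow_le_pow_left₀ (by positivity) sqrt2_inv_le n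

lemma B_le_geom (n : ℕ) : B ξ n ≤ 1.5 * (0.85:ℝ)^n := by
  calc B ξ n ≤ Real.sqrt 2 * ((Real.sqrt 2)⁻¹)^n := B_geom hξ n
    _ ≤ 1.5 * (0.85:ℝ)^n := by
        apply mul_le_mul (sqrt2_le hξ) ?_ (by positivity) (by norm_num)
        exact pow_le_pow_left₀ (by positivity) sqrt2_inv_le n

lemma B_succ_le_geom (n : ℕ) : B ξ (n+1) ≤ ((0.85:ℝ)^n)^2 := by
  have hs0 : (0:ℝ) < Real.sqrt 2 := Real.sqrt_pos.2 (by norm_num)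
  have hs2 : Real.sqrt 2 * (Real.sqrt 2)⁻¹ = 1 := mul_inv_cancel₀ hs0.ne'
  calc B ξ (n+1) ≤ Real.sqrt 2 * ((Real.sqrt 2)⁻¹)^(n+1) := B_geom hξ (n+1)
    _ = ((Real.sqrt 2)⁻¹)^n := by rw [pow_succ]; rw [show Real.sqrt 2 * (((Real.sqrt 2)⁻¹)^n * (Real.sqrt 2)⁻¹) = (Real.sqrt 2 * (Real.sqrt 2)⁻¹) * ((Real.sqrt 2)⁻¹)^n from by ring, hs2, one_mul]
    _ ≤ ((0.7225:ℝ))^n := pow_le_pow_left₀ (by positivity) sqrt2_inv_le' n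
    _ = ((0.85:ℝ)^n)^2 := by rw [← pow_mul, mul_comm n 2, pow_mul]; norm_num
    
lemma sqrtB_le_geom (n : ℕ) : Real.sqrt (B ξ (n+1)) ≤ (0.85:ℝ)^n := by
  calc Real.sqrt (B ξ (n+1)) ≤ Real.sqrt (((0.85:ℝ)^n)^2) := Real.sqrt_le_sqrt (B_succ_le_geom hξ n)
    _ = (0.85:ℝ)^n := Real.sqrt_sq (by positivity)

end basic2

section YS

omit hξ in
lemma xlog_le (x : ℝ) (hx : 0 < x) : x * Real.log (1/x) ≤ 2 * Real.sqrt x := by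
  have hsx : 0 < Real.sqrt x := Real.sqrt_pos.2 hx
  have h1 : Real.log (1/x) = 2 * Real.log (Real.sqrt x)⁻¹ := by
    have hls := Real.log_sqrt hx.le
    rw [one_div, Real.log_inv, Real.log_inv]
    linarith
  have h2 : Real.log (Real.sqrt x)⁻¹ ≤ (Real.sqrt x)⁻¹ - 1 :=
    Real.log_le_sub_one_of_pos (by positivity)
  have h3 : x * (Real.sqrt x)⁻¹ = Real.sqrt x := by
    rw [← div_eq_mul_inv, Real.div_sqrt]
  nlinarith [hx.le, Real.sqrt_nonneg x]

include hξ

lemma t_eq (n : ℕ) : gaussIter ξ n = B ξ (n+1) / B ξ n := by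
  rw [B_succ, mul_comm, mul_div_assoc, div_self (B_pos hξ n).ne', mul_one]

lemma log_t_nonneg (n : ℕ) : 0 ≤ Real.log (1 / gaussIter ξ n) := by
  apply Real.log_nonneg
  rw [le_one_div (by norm_num) (t_pos hξ n)]
  simpa using (t_lt_one (ξ:=ξ) n).le

lemma log_t_eq (n : ℕ) : Real.log (1 / gaussIter ξ n) = Real.log (B ξ n / B ξ (n+1)) := by
  rw [t_eq hξ, one_div, inv_div]

lemma qpos (n : ℕ) : (0:ℝ) < (q ξ n : ℝ) := by
  have := q_one_le hξ n
  have : (1:ℝ) ≤ (q ξ n : ℝ) := by exact_mod_cast this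
  linarith

lemma logS_nonneg (n : ℕ) : 0 ≤ Real.log ((q ξ (n+1) : ℝ) / (q ξ n : ℝ)) := by
  apply Real.log_nonneg
  rw [le_div_iff₀ (qpos hξ n), one_mul]
  exact_mod_cast q_mono_succ hξ n

lemma termY_le (n : ℕ) :
    B ξ n * Real.log (1 / gaussIter ξ n) ≤
      (q ξ n : ℝ)⁻¹ * Real.log ((q ξ (n+1) : ℝ) / (q ξ n : ℝ)) + Real.log 2 * (q ξ n : ℝ)⁻¹ := by
  have hq := qpos hξ n
  have hq1 := qpos hξ (n+1)
  have hB := B_pos hξ n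
  have hB1 := B_pos hξ (n+1)
  have h1 : B ξ n * (q ξ n : ℝ) ≤ 1 := Bq_le_one hξ n
  have h2 : 1/2 ≤ B ξ (n+1) * (q ξ (n+1) : ℝ) := half_le_Bq hξ (n+1)
  have hdd : B ξ n / B ξ (n+1) ≤ (2 * (q ξ (n+1) : ℝ)) / (q ξ n : ℝ) := by
    rw [div_le_div_iff₀ hB1 hq]
    nlinarith
  have hlog : Real.log (1 / gaussIter ξ n) ≤
      Real.log ((q ξ (n+1) : ℝ) / (q ξ n : ℝ)) + Real.log 2 := by
    rw [log_t_eq hξ]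
    calc Real.log (B ξ n / B ξ (n+1)) ≤ Real.log ((2 * (q ξ (n+1) : ℝ)) / (q ξ n : ℝ)) :=
          Real.log_le_log (by positivity) hdd
      _ = Real.log ((q ξ (n+1) : ℝ) / (q ξ n : ℝ)) + Real.log 2 := by
          rw [show (2 * (q ξ (n+1) : ℝ)) / (q ξ n : ℝ) = 2 * ((q ξ (n+1) : ℝ) / (q ξ n : ℝ)) from by ring,
            Real.log_mul (by norm_num) (by positivity)]
          ring
  have hBq : B ξ n ≤ (q ξ n : ℝ)⁻¹ := by
    rw [← le_div_iff₀ hq] at h1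
    rwa [one_div] at h1
  calc B ξ n * Real.log (1 / gaussIter ξ n) ≤ (q ξ n : ℝ)⁻¹ * Real.log (1 / gaussIter ξ n) :=
        mul_le_mul_of_nonneg_right hBq (log_t_nonneg hξ n)
    _ ≤ (q ξ n : ℝ)⁻¹ * (Real.log ((q ξ (n+1) : ℝ) / (q ξ n : ℝ)) + Real.log 2) :=
        mul_le_mul_of_nonneg_left hlog (by positivity)
    _ = _ := by ring

end YS

section YS2
include hξ

lemma termS_le (n : ℕ) :
    (q ξ n : ℝ)⁻¹ * Real.log ((q ξ (n+1) : ℝ) / (q ξ n : ℝ)) ≤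
      B ξ n * Real.log (1 / gaussIter ξ n) +
        (B ξ n * Real.log 2 + B ξ (n+1) * Real.log (1 / gaussIter ξ n) + B ξ (n+1) * Real.log 2) := by
  have hq := qpos hξ n
  have hq1 := qpos hξ (n+1)
  have hB := B_pos hξ n
  have hB1 := B_pos hξ (n+1)
  have h1 : B ξ n * (q ξ n : ℝ) ≤ 1 := Bq_le_one hξ n
  have h1' : B ξ (n+1) * (q ξ (n+1) : ℝ) ≤ 1 := Bq_le_one hξ (n+1)
  have h2 : 1/2 ≤ B ξ n * (q ξ n : ℝ) := half_le_Bq hξ n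
  -- log(q_{n+1}/q_n) ≤ log(1/t_n) + log 2
  have hdd : (q ξ (n+1) : ℝ) / (q ξ n : ℝ) ≤ 2 * (B ξ n / B ξ (n+1)) := by
    rw [show 2 * (B ξ n / B ξ (n+1)) = (2 * B ξ n) / B ξ (n+1) from by ring,
      div_le_div_iff₀ hq hB1]
    nlinarith
  have hlog : Real.log ((q ξ (n+1) : ℝ) / (q ξ n : ℝ)) ≤
      Real.log (1 / gaussIter ξ n) + Real.log 2 := by
    rw [log_t_eq hξ]
    calc Real.log ((q ξ (n+1) : ℝ) / (q ξ n : ℝ)) ≤ Real.log (2 * (B ξ n / B ξ (n+1))) :=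
          Real.log_le_log (by positivity) hdd
      _ = Real.log (B ξ n / B ξ (n+1)) + Real.log 2 := by
          rw [Real.log_mul (by norm_num) (by positivity)]; ring
  -- (q n)⁻¹ ≤ B n + B (n+1)
  have hinv : (q ξ n : ℝ)⁻¹ ≤ B ξ n + B ξ (n+1) := by
    have hk := keyid hξ n
    have hqm : (qm ξ n : ℝ) ≤ (q ξ n : ℝ) := by exact_mod_cast qm_le_q hξ n
    have h3 : 1 ≤ (B ξ n + B ξ (n+1)) * (q ξ n : ℝ) := by nlinarith
    have := mul_le_mul_of_nonneg_right h3 (inv_nonneg.2 hq.le)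
    rwa [one_mul, mul_assoc, mul_inv_cancel₀ hq.ne', mul_one] at this
  calc (q ξ n : ℝ)⁻¹ * Real.log ((q ξ (n+1) : ℝ) / (q ξ n : ℝ))
      ≤ (B ξ n + B ξ (n+1)) * Real.log ((q ξ (n+1) : ℝ) / (q ξ n : ℝ)) :=
        mul_le_mul_of_nonneg_right hinv (logS_nonneg hξ n)
    _ ≤ (B ξ n + B ξ (n+1)) * (Real.log (1 / gaussIter ξ n) + Real.log 2) :=
        mul_le_mul_of_nonneg_left hlog (by positivity)
    _ = _ := by ring

lemma eB_le (n : ℕ) :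
    B ξ n * Real.log 2 + B ξ (n+1) * Real.log (1 / gaussIter ξ n) + B ξ (n+1) * Real.log 2
      ≤ 5 * (0.85:ℝ)^n := by
  have hB := B_pos hξ n
  have hB1 := B_pos hξ (n+1)
  have hlog2 : Real.log 2 ≤ 1 := by
    have := Real.log_le_sub_one_of_pos (by norm_num : (0:ℝ) < 2)
    linarith
  have hlog2' : (0:ℝ) ≤ Real.log 2 := Real.log_nonneg (by norm_num)
  have hg1 : B ξ n * Real.log 2 ≤ 1.5 * (0.85:ℝ)^n := by
    calc B ξ n * Real.log 2 ≤ B ξ n * 1 := mul_le_mul_of_nonneg_left hlog2 hB.le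
      _ = B ξ n := mul_one _
      _ ≤ 1.5 * (0.85:ℝ)^n := B_le_geom hξ n
  have hg3 : B ξ (n+1) * Real.log 2 ≤ 1.5 * (0.85:ℝ)^n := by
    calc B ξ (n+1) * Real.log 2 ≤ B ξ n * Real.log 2 :=
          mul_le_mul_of_nonneg_right (B_succ_le hξ n) hlog2'
      _ ≤ 1.5 * (0.85:ℝ)^n := hg1
  have hg2 : B ξ (n+1) * Real.log (1 / gaussIter ξ n) ≤ 2 * (0.85:ℝ)^n := by
    have hmono : Real.log (1 / gaussIter ξ n) ≤ Real.log (1 / B ξ (n+1)) := by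
      rw [log_t_eq hξ]
      apply Real.log_le_log (by positivity)
      rw [div_le_div_iff₀ hB1 hB1, one_mul]
      nlinarith [B_le_one hξ n]
    calc B ξ (n+1) * Real.log (1 / gaussIter ξ n) ≤ B ξ (n+1) * Real.log (1 / B ξ (n+1)) :=
          mul_le_mul_of_nonneg_left hmono hB1.le
      _ ≤ 2 * Real.sqrt (B ξ (n+1)) := xlog_le _ hB1
      _ ≤ 2 * (0.85:ℝ)^n := by
          have := sqrtB_le_geom hξ n
          linarith
  linarith

lemma eA_le (n : ℕ) : Real.log 2 * (q ξ n : ℝ)⁻¹ ≤ 1.5 * (0.85:ℝ)^n := by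
  have hlog2 : Real.log 2 ≤ 1 := by
    have := Real.log_le_sub_one_of_pos (by norm_num : (0:ℝ) < 2)
    linarith
  have h := invq_le_geom hξ n
  have hq := qpos hξ n
  calc Real.log 2 * (q ξ n : ℝ)⁻¹ ≤ 1 * (q ξ n : ℝ)⁻¹ := by
        apply mul_le_mul_of_nonneg_right hlog2 (by positivity)
    _ = (q ξ n : ℝ)⁻¹ := one_mul _
    _ ≤ 1.5 * (0.85:ℝ)^n := h

end YS2

/-- geometric sum bound in `ℝ≥0∞`. -/
lemma tsum_ofReal_geom (e : ℕ → ℝ) (c : ℝ) (hc : 0 ≤ c)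
    (h : ∀ n, e n ≤ c * (0.85:ℝ)^n) :
    ∑' n, ENNReal.ofReal (e n) ≤ ENNReal.ofReal (c * 7) := by
  have step1 : ∑' n, ENNReal.ofReal (e n) ≤ ∑' n, ENNReal.ofReal (c * (0.85:ℝ)^n) :=
    ENNReal.tsum_le_tsum fun n => ENNReal.ofReal_le_ofReal (h n)
  have step2 : ∀ n : ℕ, ENNReal.ofReal (c * (0.85:ℝ)^n)
      = ENNReal.ofReal c * (ENNReal.ofReal 0.85)^n := by
    intro n
    rw [ENNReal.ofReal_mul hc, ENNReal.ofReal_pow (by norm_num)]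
  have step3 : ∑' n, ENNReal.ofReal (c * (0.85:ℝ)^n)
      = ENNReal.ofReal c * (1 - ENNReal.ofReal 0.85)⁻¹ := by
    simp_rw [step2]
    rw [ENNReal.tsum_mul_left, ENNReal.tsum_geometric]
  have step4 : (1 : ℝ≥0∞) - ENNReal.ofReal 0.85 = ENNReal.ofReal 0.15 := by
    rw [← ENNReal.ofReal_one, ← ENNReal.ofReal_sub _ (by norm_num : (0:ℝ) ≤ 0.85)]
    norm_num
  calc ∑' n, ENNReal.ofReal (e n) ≤ ENNReal.ofReal c * (1 - ENNReal.ofReal 0.85)⁻¹ := by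
        rw [← step3]; exact step1
    _ = ENNReal.ofReal c * ENNReal.ofReal (0.15)⁻¹ := by
        rw [step4, ← ENNReal.ofReal_inv_of_pos (by norm_num)]
    _ = ENNReal.ofReal (c * (0.15)⁻¹) := by rw [ENNReal.ofReal_mul hc]
    _ ≤ ENNReal.ofReal (c * 7) := by
        apply ENNReal.ofReal_le_ofReal
        have : (0.15:ℝ)⁻¹ ≤ 7 := by norm_num
        nlinarith

noncomputable def Ys (ξ : ℝ) : ℝ≥0∞ :=
  ∑' n, ENNReal.ofReal (B ξ n * Real.log (1 / gaussIter ξ n))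

noncomputable def Ss (ξ : ℝ) : ℝ≥0∞ :=
  ∑' n, ENNReal.ofReal ((q ξ n : ℝ)⁻¹ * Real.log ((q ξ (n+1) : ℝ) / (q ξ n : ℝ)))

section YScompare
include hξ

lemma Ys_le_Ss : Ys ξ ≤ Ss ξ + ENNReal.ofReal 11 := by
  have hpt : ∀ n, ENNReal.ofReal (B ξ n * Real.log (1 / gaussIter ξ n)) ≤
      ENNReal.ofReal ((q ξ n : ℝ)⁻¹ * Real.log ((q ξ (n+1) : ℝ) / (q ξ n : ℝ)))
        + ENNReal.ofReal (Real.log 2 * (q ξ n : ℝ)⁻¹) := by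
    intro n
    calc ENNReal.ofReal (B ξ n * Real.log (1 / gaussIter ξ n))
        ≤ ENNReal.ofReal ((q ξ n : ℝ)⁻¹ * Real.log ((q ξ (n+1) : ℝ) / (q ξ n : ℝ))
            + Real.log 2 * (q ξ n : ℝ)⁻¹) := ENNReal.ofReal_le_ofReal (termY_le hξ n)
      _ ≤ _ := ENNReal.ofReal_add_le
  calc Ys ξ ≤ ∑' n, (ENNReal.ofReal ((q ξ n : ℝ)⁻¹ * Real.log ((q ξ (n+1) : ℝ) / (q ξ n : ℝ)))
        + ENNReal.ofReal (Real.log 2 * (q ξ n : ℝ)⁻¹)) := ENNReal.tsum_le_tsum hpt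
    _ = Ss ξ + ∑' n, ENNReal.ofReal (Real.log 2 * (q ξ n : ℝ)⁻¹) := ENNReal.tsum_add
    _ ≤ Ss ξ + ENNReal.ofReal 11 := by
        apply add_le_add_right
        calc ∑' n, ENNReal.ofReal (Real.log 2 * (q ξ n : ℝ)⁻¹)
            ≤ ENNReal.ofReal (1.5 * 7) := tsum_ofReal_geom _ 1.5 (by norm_num) (eA_le hξ)
          _ ≤ ENNReal.ofReal 11 := ENNReal.ofReal_le_ofReal (by norm_num)

lemma Ss_le_Ys : Ss ξ ≤ Ys ξ + ENNReal.ofReal 35 := by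
  have hpt : ∀ n, ENNReal.ofReal ((q ξ n : ℝ)⁻¹ * Real.log ((q ξ (n+1) : ℝ) / (q ξ n : ℝ))) ≤
      ENNReal.ofReal (B ξ n * Real.log (1 / gaussIter ξ n))
        + ENNReal.ofReal (B ξ n * Real.log 2 + B ξ (n+1) * Real.log (1 / gaussIter ξ n)
            + B ξ (n+1) * Real.log 2) := by
    intro n
    calc ENNReal.ofReal ((q ξ n : ℝ)⁻¹ * Real.log ((q ξ (n+1) : ℝ) / (q ξ n : ℝ)))
        ≤ ENNReal.ofReal (B ξ n * Real.log (1 / gaussIter ξ n)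
            + (B ξ n * Real.log 2 + B ξ (n+1) * Real.log (1 / gaussIter ξ n)
              + B ξ (n+1) * Real.log 2)) := ENNReal.ofReal_le_ofReal (termS_le hξ n)
      _ ≤ _ := ENNReal.ofReal_add_le
  calc Ss ξ ≤ ∑' n, (ENNReal.ofReal (B ξ n * Real.log (1 / gaussIter ξ n))
        + ENNReal.ofReal (B ξ n * Real.log 2 + B ξ (n+1) * Real.log (1 / gaussIter ξ n)
            + B ξ (n+1) * Real.log 2)) := ENNReal.tsum_le_tsum hpt
    _ = Ys ξ + ∑' n, ENNReal.ofReal (B ξ n * Real.log 2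
            + B ξ (n+1) * Real.log (1 / gaussIter ξ n) + B ξ (n+1) * Real.log 2) := ENNReal.tsum_add
    _ ≤ Ys ξ + ENNReal.ofReal 35 := by
        apply add_le_add_right
        calc ∑' n, ENNReal.ofReal (B ξ n * Real.log 2
              + B ξ (n+1) * Real.log (1 / gaussIter ξ n) + B ξ (n+1) * Real.log 2)
            ≤ ENNReal.ofReal (5 * 7) := tsum_ofReal_geom _ 5 (by norm_num) (eB_le hξ)
          _ = ENNReal.ofReal 35 := by norm_num

end YScompare

/-- Telescoping lemma: summing clamped log-increments of a monotone unbounded sequence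
over the interval [va, vb] gives log(vb/va). -/
lemma telescope (u : ℕ → ℝ) (va vb : ℝ) (hm : Monotone u) (h1 : ∀ n, 1 ≤ u n)
    (h0 : u 0 ≤ va) (hA : 1 ≤ va) (hAB : va ≤ vb)
    (htop : Filter.Tendsto u Filter.atTop Filter.atTop) :
    ∑' k, ENNReal.ofReal (Real.log (min (u (k+1)) vb / max (u k) va))
      = ENNReal.ofReal (Real.log (vb / va)) := by
  have hva : (0:ℝ) < va := lt_of_lt_of_le zero_lt_one hA
  have hvb : (0:ℝ) < vb := lt_of_lt_of_le hva hAB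
  rcases eq_or_lt_of_le hAB with heq | hlt
  · subst heq
    have hz : ∀ k, ENNReal.ofReal (Real.log (min (u (k+1)) va / max (u k) va)) = 0 := by
      intro k
      apply ENNReal.ofReal_of_nonpos
      have hmin0 : (0:ℝ) ≤ min (u (k+1)) va := le_min (by linarith [h1 (k+1)]) hva.le
      have hmax0 : (0:ℝ) < max (u k) va := lt_of_lt_of_le hva (le_max_right _ _)
      apply Real.log_nonpos (by positivity)
      rw [div_le_one hmax0]
      exact le_trans (min_le_right _ _) (le_max_right _ _)
    simp only [hz, tsum_zero]
    rw [div_self hva.ne', Real.log_one, ENNReal.ofReal_zero]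
  · have hclamp_pos : ∀ x : ℝ, 0 < min (max x va) vb := fun x =>
      lt_min (lt_of_lt_of_le hva (le_max_right _ _)) hvb
    have hclamp_ge : ∀ x : ℝ, va ≤ min (max x va) vb := fun x =>
      le_min (le_max_right _ _) hAB
    set F : ℝ → ℝ := fun x => Real.log (min (max x va) vb) - Real.log va with hF
    have hF0 : F (u 0) = 0 := by
      simp only [hF]
      rw [max_eq_right h0, min_eq_left hAB, sub_self]
    have hFnonneg : ∀ x, 0 ≤ F x := by
      intro x
      have := Real.log_le_log hva (hclamp_ge x)
      simp only [hF, sub_nonneg]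
      exact this
    have hFle : ∀ x, F x ≤ Real.log vb - Real.log va := by
      intro x
      have := Real.log_le_log (hclamp_pos x) (min_le_right _ _)
      simp only [hF]
      linarith
    have hFmono : Monotone F := by
      intro x y hxy
      simp only [hF]
      have hmm : min (max x va) vb ≤ min (max y va) vb :=
        min_le_min (max_le_max hxy (le_refl va)) (le_refl vb)
      have := Real.log_le_log (hclamp_pos x) hmm
      linarith
    have hdiff : ∀ a b : ℝ, a ≤ b → 1 ≤ a →
        ENNReal.ofReal (Real.log (min b vb / max a va)) = ENNReal.ofReal (F b - F a) := by
      intro a b hab ha1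
      have ha0 : (0:ℝ) < a := lt_of_lt_of_le zero_lt_one ha1
      have hb0 : (0:ℝ) < b := lt_of_lt_of_le ha0 hab
      have hmaxa : (0:ℝ) < max a va := lt_of_lt_of_le hva (le_max_right _ _)
      have hminb0 : (0:ℝ) < min b vb := lt_min hb0 hvb
      rcases le_or_gt b va with hbva | hbva
      · -- b ≤ va : both sides vanish
        have hL : ENNReal.ofReal (Real.log (min b vb / max a va)) = 0 := by
          apply ENNReal.ofReal_of_nonpos
          apply Real.log_nonpos (by positivity)
          rw [div_le_one hmaxa]
          exact le_trans (min_le_left _ _) (le_trans hbva (le_max_right _ _))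
        have hFb : F b = 0 := by
          simp only [hF]
          rw [max_eq_right hbva, min_eq_left hAB, sub_self]
        have hFa : F a = 0 := by
          simp only [hF]
          rw [max_eq_right (le_trans hab hbva), min_eq_left hAB, sub_self]
        rw [hL, hFb, hFa, sub_zero, ENNReal.ofReal_zero]
      · rcases le_or_gt vb a with hvba | hvba
        · -- vb ≤ a : both sides vanish
          have hL : ENNReal.ofReal (Real.log (min b vb / max a va)) = 0 := by
            apply ENNReal.ofReal_of_nonpos
            apply Real.log_nonpos (by positivity)
            rw [div_le_one hmaxa]
            exact le_trans (min_le_right _ _) (le_trans hvba (le_max_left _ _))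
          have hFb : F b = Real.log vb - Real.log va := by
            simp only [hF]
            rw [max_eq_left (le_trans hAB (le_trans hvba hab)),
              min_eq_right (le_trans hvba hab)]
          have hFa : F a = Real.log vb - Real.log va := by
            simp only [hF]
            rw [max_eq_left (le_trans hAB hvba), min_eq_right hvba]
          rw [hL, hFb, hFa, sub_self, ENNReal.ofReal_zero]
        · -- va < b and a < vb : both sides agree
          have hFb : F b = Real.log (min b vb) - Real.log va := by
            simp only [hF]
            rw [max_eq_left hbva.le]
          have hFa : F a = Real.log (max a va) - Real.log va := by
            simp only [hF]
            rw [min_eq_left (max_le hvba.le hAB)]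
          rw [hFb, hFa, Real.log_div hminb0.ne' hmaxa.ne']
          congr 1
          ring
    have hpartial : ∀ K, ∑ k ∈ Finset.range K,
        ENNReal.ofReal (Real.log (min (u (k+1)) vb / max (u k) va)) = ENNReal.ofReal (F (u K)) := by
      intro K
      induction K with
      | zero => simp [hF0]
      | succ K ih =>
        have hmKK := hm (Nat.le_succ K)
        rw [Finset.sum_range_succ, ih, hdiff (u K) (u (K+1)) hmKK (h1 K),
          ← ENNReal.ofReal_add (hFnonneg (u K)) (by linarith [hFmono hmKK] : (0:ℝ) ≤ F (u (K+1)) - F (u K))]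
        congr 1
        ring
    rw [ENNReal.tsum_eq_iSup_nat]
    simp only [hpartial]
    apply le_antisymm
    · apply iSup_le
      intro K
      apply ENNReal.ofReal_le_ofReal
      rw [Real.log_div hvb.ne' hva.ne']
      exact hFle (u K)
    · obtain ⟨K, hK⟩ := (htop.eventually_ge_atTop vb).exists
      have hFK : F (u K) = Real.log vb - Real.log va := by
        simp only [hF]
        rw [max_eq_left (le_trans hAB hK), min_eq_right hK]
      apply le_iSup_of_le K
      rw [hFK, Real.log_div hvb.ne' hva.ne']

section Main

/-- index of the last θ-denominator comparable to scale n (for multiplier m). -/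
noncomputable def j0 (θ : ℝ) (m : ℕ) (n : ℕ) : ℕ :=
  sInf {j | B θ (j+1) ≤ (m:ℕ) * B θ (n+1)}

variable {θ : ℝ} {m : ℕ}

lemma j0_spec (hθ : Irrational θ) (hm : 1 ≤ m) (n : ℕ) :
    B θ (j0 θ m n + 1) ≤ (m:ℝ) * B θ (n+1) ∧ j0 θ m n ≤ n := by
  have hmem : n ∈ {j | B θ (j+1) ≤ (m:ℕ) * B θ (n+1)} := by
    have := B_pos hθ (n+1)
    have hm1 : (1:ℝ) ≤ (m:ℝ) := by exact_mod_cast hm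
    simp only [Set.mem_setOf_eq]
    nlinarith
  constructor
  · have := Nat.sInf_mem (⟨n, hmem⟩ : Set.Nonempty _)
    exact this
  · exact Nat.sInf_le hmem

lemma j0_min (hθ : Irrational θ) (hm : 1 ≤ m) {n k : ℕ} (hk : k < j0 θ m n) :
    ¬ (B θ (k+1) ≤ (m:ℝ) * B θ (n+1)) := by
  have := Nat.notMem_of_lt_sInf (hk : k < sInf {j | B θ (j+1) ≤ (m:ℕ) * B θ (n+1)})
  simpa using this

lemma B_chain (hθ : Irrational θ) (a : ℕ) : ∀ s : ℕ, B θ (a + 2*s) ≤ B θ a / 2^s := by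
  intro s
  induction s with
  | zero => simp
  | succ s ih =>
    have h2 : B θ (a + 2*s + 2) ≤ B θ (a + 2*s) / 2 := B_half hθ (a + 2*s)
    have he : a + 2*(s+1) = a + 2*s + 2 := by ring
    rw [he]
    calc B θ (a + 2*s + 2) ≤ B θ (a + 2*s) / 2 := h2
      _ ≤ (B θ a / 2^s) / 2 := by linarith
      _ = B θ a / 2^(s+1) := by rw [pow_succ]; ring

lemma j0_index (hθ : Irrational θ) (hm : 1 ≤ m) (n : ℕ) :
    n - j0 θ m n ≤ 2 * Nat.log 2 m + 1 := by
  obtain ⟨hmem, hjn⟩ := j0_spec hθ hm n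
  set s := (n - j0 θ m n) / 2 with hs
  have hle : j0 θ m n + 1 + 2*s ≤ n + 1 := by omega
  have h1 : B θ (n+1) ≤ B θ (j0 θ m n + 1 + 2*s) := B_anti hθ hle
  have h2 := B_chain hθ (j0 θ m n + 1) s
  have hp : (0:ℝ) < (2:ℝ)^s := by positivity
  have h3 : B θ (n+1) * 2^s ≤ B θ (j0 θ m n + 1) := by
    rw [← le_div_iff₀ hp]
    linarith
  have h4 : (2:ℝ)^s ≤ (m:ℝ) := by
    have hB := B_pos hθ (n+1)
    nlinarith
  have h5 : (2:ℕ)^s ≤ m := by exact_mod_cast h4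
  have h6 : s ≤ Nat.log 2 m := Nat.le_log_of_pow_le (by norm_num) h5
  omega

lemma fract_mul_eq (hθ : Irrational θ) (m : ℕ) :
    Int.fract ((m:ℝ) * θ) = (m:ℝ) * Int.fract θ - ⌊(m:ℝ) * Int.fract θ⌋ := by
  have h1 : (m:ℝ) * θ = (m:ℝ) * Int.fract θ + ((m * ⌊θ⌋ : ℤ) : ℝ) := by
    rw [Int.fract]
    push_cast
    ring
  rw [h1, Int.fract_add_intCast, Int.fract]

/-- The key lemma: if the `k`-plateau of `mθ` overlaps the `n`-plateau of `θ`, then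
`q^{(mθ)}_k` is at least `q^{(θ)}_{j0(n)} / m`. -/
lemma key_lemma (hθ : Irrational θ) (hm : 1 ≤ m) (n k : ℕ)
    (hov1 : (q ((m:ℝ)*θ) k : ℝ) < (q θ (n+1) : ℝ))
    (hov2 : (q θ n : ℝ) < (q ((m:ℝ)*θ) (k+1) : ℝ)) :
    (q θ (j0 θ m n) : ℝ) ≤ (m:ℝ) * (q ((m:ℝ)*θ) k : ℝ) := by
  have hm0 : m ≠ 0 := by omega
  have hθ2 : Irrational ((m:ℝ) * θ) := hθ.natCast_mul hm0
  set ξ₂ := (m:ℝ) * θ with hξ₂def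
  set g : ℤ := ⌊(m:ℝ) * Int.fract θ⌋ with hg
  have hα₂ : Int.fract ξ₂ = (m:ℝ) * Int.fract θ - (g:ℝ) := fract_mul_eq hθ m
  -- Link 1 : |q θ n * α₂ - R₁| = m * B θ (n+1)
  have link1 : |(q θ n : ℝ) * Int.fract ξ₂ - ((m * p θ n - q θ n * g : ℤ) : ℝ)|
      = (m:ℝ) * B θ (n+1) := by
    have he : (q θ n : ℝ) * Int.fract ξ₂ - ((m * p θ n - q θ n * g : ℤ) : ℝ)
        = (m:ℝ) * ((q θ n : ℝ) * Int.fract θ - (p θ n : ℝ)) := by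
      rw [hα₂]
      push_cast
      ring
    rw [he, abs_mul, abs_of_nonneg (by positivity : (0:ℝ) ≤ (m:ℝ)), E_abs hθ n]
  -- best approx of ξ₂ at level k applied to q θ n
  have hbest2 : B ξ₂ (k+1) ≤ (m:ℝ) * B θ (n+1) := by
    rw [← link1]
    apply best hθ2 k (q θ n) (m * p θ n - q θ n * g) (q_one_le hθ n)
    exact_mod_cast hov2
  by_contra hcon
  push_neg at hcon
  -- j0 ≥ 1
  have hj0pos : 1 ≤ j0 θ m n := by
    by_contra h0
    have h00 : j0 θ m n = 0 := by omega
    rw [h00] at hcon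
    have h1 : (1:ℝ) ≤ (m:ℝ) * (q ξ₂ k : ℝ) := by
      have hq1 : (1:ℝ) ≤ (q ξ₂ k : ℝ) := by exact_mod_cast q_one_le hθ2 k
      have hm1 : (1:ℝ) ≤ (m:ℝ) := by exact_mod_cast hm
      nlinarith
    rw [q_zero] at hcon
    push_cast at hcon
    linarith
  obtain ⟨j', hj'⟩ : ∃ j', j0 θ m n = j' + 1 := ⟨j0 θ m n - 1, by omega⟩
  -- Link 2
  have link2 : |((m * q ξ₂ k : ℤ) : ℝ) * Int.fract θ - ((p ξ₂ k + q ξ₂ k * g : ℤ) : ℝ)|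
      = B ξ₂ (k+1) := by
    have he : ((m * q ξ₂ k : ℤ) : ℝ) * Int.fract θ - ((p ξ₂ k + q ξ₂ k * g : ℤ) : ℝ)
        = (q ξ₂ k : ℝ) * Int.fract ξ₂ - (p ξ₂ k : ℝ) := by
      rw [hα₂]
      push_cast
      ring
    rw [he, E_abs hθ2 k]
  have hbest1 : B θ (j' + 1) ≤ B ξ₂ (k+1) := by
    rw [← link2]
    apply best hθ j' (m * q ξ₂ k) (p ξ₂ k + q ξ₂ k * g)
    · have hq1 : (1:ℤ) ≤ q ξ₂ k := q_one_le hθ2 k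
      have hm1 : (1:ℤ) ≤ (m:ℤ) := by exact_mod_cast hm
      nlinarith
    · rw [← hj']
      exact_mod_cast hcon
  have hmin : ¬ (B θ (j' + 1) ≤ (m:ℝ) * B θ (n+1)) := j0_min hθ hm (by omega)
  exact hmin (le_trans hbest1 hbest2)

lemma err_bound (hθ : Irrational θ) (hm : 1 ≤ m) (n : ℕ) :
    (m:ℝ) * (q θ (j0 θ m n) : ℝ)⁻¹ * Real.log ((q θ (n+1) : ℝ) / (q θ n : ℝ)) ≤
      (m:ℝ) * ((q θ n : ℝ)⁻¹ * Real.log ((q θ (n+1) : ℝ) / (q θ n : ℝ)))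
        + (m:ℝ) * Real.log (m+1) * (q θ (n - (2 * Nat.log 2 m + 1)) : ℝ)⁻¹ := by
  have hm1 : (1:ℝ) ≤ (m:ℝ) := by exact_mod_cast hm
  have hlogm : (0:ℝ) ≤ Real.log (m+1) := Real.log_nonneg (by push_cast; linarith)
  obtain ⟨hmem, hjn⟩ := j0_spec hθ hm n
  rcases eq_or_lt_of_le hjn with heq | hlt
  · rw [heq]
    have : (0:ℝ) ≤ (m:ℝ) * Real.log (m+1) * (q θ (n - (2 * Nat.log 2 m + 1)) : ℝ)⁻¹ := by
      have := qpos hθ (n - (2 * Nat.log 2 m + 1))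
      positivity
    nlinarith [this]
  · -- j0 < n : small quotient case
    have hq := qpos hθ n
    have hq1 := qpos hθ (n+1)
    have hB1 := B_pos hθ (n+1)
    have hBn := B_pos hθ n
    -- B θ n ≤ m * B θ (n+1)
    have hBm : B θ n ≤ (m:ℝ) * B θ (n+1) := by
      calc B θ n ≤ B θ (j0 θ m n + 1) := B_anti hθ (by omega)
        _ ≤ (m:ℝ) * B θ (n+1) := hmem
    -- A θ n ≤ m
    have hA : (A θ n : ℝ) ≤ (m:ℝ) := by
      have hfl : (A θ n : ℝ) ≤ (gaussIter θ n)⁻¹ := by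
        rw [show A θ n = ⌊1 / gaussIter θ n⌋ from rfl, ← one_div]
        exact Int.floor_le (1 / gaussIter θ n)
      have ht : gaussIter θ n = B θ (n+1) / B θ n := t_eq hθ n
      have hinv : (gaussIter θ n)⁻¹ = B θ n / B θ (n+1) := by
        rw [ht, inv_div]
      rw [hinv] at hfl
      calc (A θ n : ℝ) ≤ B θ n / B θ (n+1) := hfl
        _ ≤ (m:ℝ) := by rw [div_le_iff₀ hB1]; exact hBm
    -- q (n+1) ≤ (m+1) q n
    have hqq : (q θ (n+1) : ℝ) ≤ ((m:ℝ)+1) * (q θ n : ℝ) := by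
      have hcast : (q θ (n+1) : ℝ) = (A θ n : ℝ) * (q θ n : ℝ) + (qm θ n : ℝ) := by
        rw [q_succ]; push_cast; ring
      have hqm : (qm θ n : ℝ) ≤ (q θ n : ℝ) := by exact_mod_cast qm_le_q hθ n
      rw [hcast]
      nlinarith
    have hL : Real.log ((q θ (n+1) : ℝ) / (q θ n : ℝ)) ≤ Real.log ((m:ℝ)+1) := by
      apply Real.log_le_log (by positivity)
      rw [div_le_iff₀ hq]
      linarith
    have hmono : (q θ (j0 θ m n) : ℝ)⁻¹ ≤ (q θ (n - (2 * Nat.log 2 m + 1)) : ℝ)⁻¹ := by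
      apply inv_anti₀ (qpos hθ _)
      have : n - (2 * Nat.log 2 m + 1) ≤ j0 θ m n := by
        have := j0_index hθ hm n
        omega
      exact_mod_cast q_mono hθ this
    have hterm1 : (0:ℝ) ≤ (m:ℝ) * ((q θ n : ℝ)⁻¹ * Real.log ((q θ (n+1) : ℝ) / (q θ n : ℝ))) := by
      have := logS_nonneg hθ n
      positivity
    have hmain : (m:ℝ) * (q θ (j0 θ m n) : ℝ)⁻¹ * Real.log ((q θ (n+1) : ℝ) / (q θ n : ℝ)) ≤
        (m:ℝ) * Real.log (m+1) * (q θ (n - (2 * Nat.log 2 m + 1)) : ℝ)⁻¹ := by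
      have hj0pos := qpos hθ (j0 θ m n)
      have hnK := qpos hθ (n - (2 * Nat.log 2 m + 1))
      have hLnn := logS_nonneg hθ n
      have hcast : ((m:ℕ):ℝ) + 1 = ((m+1 : ℕ) : ℝ) := by push_cast; ring
      rw [hcast] at hL
      calc (m:ℝ) * (q θ (j0 θ m n) : ℝ)⁻¹ * Real.log ((q θ (n+1) : ℝ) / (q θ n : ℝ))
          ≤ (m:ℝ) * (q θ (n - (2 * Nat.log 2 m + 1)) : ℝ)⁻¹ * Real.log (((m:ℕ)+1 : ℕ) : ℝ) := by
            apply mul_le_mul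
            · exact mul_le_mul_of_nonneg_left hmono (by positivity)
            · exact hL
            · exact hLnn
            · positivity
        _ = (m:ℝ) * Real.log (m+1) * (q θ (n - (2 * Nat.log 2 m + 1)) : ℝ)⁻¹ := by
            push_cast
            ring
    linarith

lemma q_tendsto (hθ : Irrational θ) :
    Filter.Tendsto (fun n => (q θ n : ℝ)) Filter.atTop Filter.atTop := by
  have hs1 : (1:ℝ) < Real.sqrt 2 := by
    nlinarith [Real.sq_sqrt (by norm_num : (0:ℝ) ≤ 2), Real.sqrt_nonneg 2]
  have h2 : Filter.Tendsto (fun n : ℕ => (Real.sqrt 2)^n / Real.sqrt 2) Filter.atTop Filter.atTop :=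
    (tendsto_pow_atTop_atTop_of_one_lt hs1).atTop_div_const (by linarith)
  apply Filter.tendsto_atTop_mono _ h2
  intro n
  have := q_geom hθ n
  rw [div_le_iff₀ (by linarith)]
  linarith

lemma em_le (hθ : Irrational θ) (hm : 1 ≤ m) (n : ℕ) :
    (m:ℝ) * Real.log (m+1) * (q θ (n - (2 * Nat.log 2 m + 1)) : ℝ)⁻¹ ≤
      (1.5 * m * Real.log (m+1) * ((0.85:ℝ)^(2 * Nat.log 2 m + 1))⁻¹) * (0.85:ℝ)^n := by
  set K := 2 * Nat.log 2 m + 1 with hK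
  have hlogm : (0:ℝ) ≤ Real.log (m+1) := Real.log_nonneg (by push_cast; norm_num)
  have hm0 : (0:ℝ) ≤ (m:ℝ) := by positivity
  have h1 : (q θ (n - K) : ℝ)⁻¹ ≤ 1.5 * (0.85:ℝ)^(n - K) := invq_le_geom hθ (n - K)
  have h2 : (0.85:ℝ)^(n - K) ≤ (0.85:ℝ)^n * ((0.85:ℝ)^K)⁻¹ := by
    have hp : (0:ℝ) < (0.85:ℝ)^K := by positivity
    rw [← div_eq_mul_inv, le_div_iff₀ hp, ← pow_add]
    apply pow_le_pow_of_le_one (by norm_num) (by norm_num)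
    omega
  calc (m:ℝ) * Real.log (m+1) * (q θ (n - K) : ℝ)⁻¹
      ≤ (m:ℝ) * Real.log (m+1) * (1.5 * (0.85:ℝ)^(n - K)) := by
        apply mul_le_mul_of_nonneg_left h1 (by positivity)
    _ ≤ (m:ℝ) * Real.log (m+1) * (1.5 * ((0.85:ℝ)^n * ((0.85:ℝ)^K)⁻¹)) := by
        apply mul_le_mul_of_nonneg_left (by nlinarith) (by positivity)
    _ = (1.5 * m * Real.log (m+1) * ((0.85:ℝ)^K)⁻¹) * (0.85:ℝ)^n := by ring

/-- Main comparison at the level of the `S` sums: `S(mθ) ≤ m S(θ) + C`. -/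
lemma Ss_mul_le (hθ : Irrational θ) (hm : 1 ≤ m) :
    Ss ((m:ℝ)*θ) ≤ ENNReal.ofReal m * Ss θ
      + ENNReal.ofReal ((1.5 * m * Real.log (m+1) * ((0.85:ℝ)^(2 * Nat.log 2 m + 1))⁻¹) * 7) := by
  have hm0 : m ≠ 0 := by omega
  have hθ2 : Irrational ((m:ℝ) * θ) := hθ.natCast_mul hm0
  set ξ₂ := (m:ℝ) * θ with hξ₂def
  set K := 2 * Nat.log 2 m + 1 with hK
  set c := 1.5 * (m:ℝ) * Real.log (m+1) * ((0.85:ℝ)^K)⁻¹ with hc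
  -- basic facts
  have hmono1 : Monotone (fun n => (q θ n : ℝ)) := fun a b h => by
    simp only
    exact_mod_cast q_mono hθ h
  have hmono2 : Monotone (fun k => (q ξ₂ k : ℝ)) := fun a b h => by
    simp only
    exact_mod_cast q_mono hθ2 h
  have hone1 : ∀ n, (1:ℝ) ≤ (q θ n : ℝ) := fun n => by exact_mod_cast q_one_le hθ n
  have hone2 : ∀ k, (1:ℝ) ≤ (q ξ₂ k : ℝ) := fun k => by exact_mod_cast q_one_le hθ2 k
  have htop1 := q_tendsto hθ
  have htop2 := q_tendsto hθ2
  -- the overlap term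
  set L : ℕ → ℕ → ℝ := fun n k =>
    Real.log (min ((q θ (n+1) : ℝ)) ((q ξ₂ (k+1) : ℝ)) / max ((q θ n : ℝ)) ((q ξ₂ k : ℝ))) with hL
  -- telescope in n for fixed k
  have tele2 : ∀ k, ∑' n, ENNReal.ofReal (L n k)
      = ENNReal.ofReal (Real.log ((q ξ₂ (k+1) : ℝ) / (q ξ₂ k : ℝ))) := by
    intro k
    exact telescope (fun n => (q θ n : ℝ)) (q ξ₂ k : ℝ) (q ξ₂ (k+1) : ℝ) hmono1 hone1
      (by rw [show q θ 0 = 1 from rfl]; exact_mod_cast hone2 k) (hone2 k)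
      (by exact_mod_cast q_mono_succ hθ2 k) htop1
  -- telescope in k for fixed n
  have tele1 : ∀ n, ∑' k, ENNReal.ofReal (L n k)
      = ENNReal.ofReal (Real.log ((q θ (n+1) : ℝ) / (q θ n : ℝ))) := by
    intro n
    have := telescope (fun k => (q ξ₂ k : ℝ)) (q θ n : ℝ) (q θ (n+1) : ℝ) hmono2 hone2
      (by rw [show q ξ₂ 0 = 1 from rfl]; exact_mod_cast hone1 n) (hone1 n)
      (by exact_mod_cast q_mono_succ hθ n) htop2
    rw [← this]
    congr 1
    funext k
    rw [hL]
    simp only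
    rw [min_comm, max_comm]
  -- step 1 : express Ss ξ₂ as a double sum
  have step1 : Ss ξ₂ = ∑' k, ∑' n, ENNReal.ofReal ((q ξ₂ k : ℝ)⁻¹) * ENNReal.ofReal (L n k) := by
    rw [Ss]
    congr 1
    funext k
    rw [ENNReal.ofReal_mul (inv_nonneg.2 (qpos hθ2 k).le), ← tele2 k, ← ENNReal.tsum_mul_left]
  -- step 2 : swap and bound pointwise
  have hpoint : ∀ n k, ENNReal.ofReal ((q ξ₂ k : ℝ)⁻¹) * ENNReal.ofReal (L n k)
      ≤ ENNReal.ofReal ((m:ℝ) * (q θ (j0 θ m n) : ℝ)⁻¹) * ENNReal.ofReal (L n k) := by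
    intro n k
    rcases le_or_gt (L n k) 0 with hL0 | hL0
    · rw [ENNReal.ofReal_of_nonpos hL0, mul_zero, mul_zero]
    · have hmax : (0:ℝ) < max ((q θ n : ℝ)) ((q ξ₂ k : ℝ)) :=
        lt_of_lt_of_le (qpos hθ n) (le_max_left _ _)
      have hrat : 1 < min ((q θ (n+1) : ℝ)) ((q ξ₂ (k+1) : ℝ)) / max ((q θ n : ℝ)) ((q ξ₂ k : ℝ)) := by
        by_contra hcon
        push_neg at hcon
        have hnn : (0:ℝ) ≤ min ((q θ (n+1) : ℝ)) ((q ξ₂ (k+1) : ℝ)) / max ((q θ n : ℝ)) ((q ξ₂ k : ℝ)) := by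
          have := qpos hθ (n+1)
          have := qpos hθ2 (k+1)
          positivity
        have := Real.log_nonpos hnn hcon
        rw [hL] at hL0
        simp only at hL0
        linarith
      rw [one_lt_div hmax] at hrat
      have hov1 : (q ξ₂ k : ℝ) < (q θ (n+1) : ℝ) :=
        lt_of_le_of_lt (le_max_right _ _) (lt_of_lt_of_le hrat (min_le_left _ _))
      have hov2 : (q θ n : ℝ) < (q ξ₂ (k+1) : ℝ) :=
        lt_of_le_of_lt (le_max_left _ _) (lt_of_lt_of_le hrat (min_le_right _ _))
      have hkey := key_lemma hθ hm n k hov1 hov2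
      apply mul_le_mul_left
      apply ENNReal.ofReal_le_ofReal
      have hq2p := qpos hθ2 k
      have hqj0p := qpos hθ (j0 θ m n)
      rw [show (m:ℝ) * (q θ (j0 θ m n) : ℝ)⁻¹ = (m:ℝ) / (q θ (j0 θ m n) : ℝ) from by ring,
        le_div_iff₀ hqj0p]
      calc (q ξ₂ k : ℝ)⁻¹ * (q θ (j0 θ m n) : ℝ) ≤ (q ξ₂ k : ℝ)⁻¹ * ((m:ℝ) * (q ξ₂ k : ℝ)) :=
            mul_le_mul_of_nonneg_left hkey (inv_nonneg.2 (qpos hθ2 k).le)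
        _ = (m:ℝ) * ((q ξ₂ k : ℝ)⁻¹ * (q ξ₂ k : ℝ)) := by ring
        _ = (m:ℝ) := by rw [inv_mul_cancel₀ hq2p.ne', mul_one]
  -- assemble
  calc Ss ξ₂ = ∑' k, ∑' n, ENNReal.ofReal ((q ξ₂ k : ℝ)⁻¹) * ENNReal.ofReal (L n k) := step1
    _ = ∑' n, ∑' k, ENNReal.ofReal ((q ξ₂ k : ℝ)⁻¹) * ENNReal.ofReal (L n k) := ENNReal.tsum_comm
    _ ≤ ∑' n, ∑' k, ENNReal.ofReal ((m:ℝ) * (q θ (j0 θ m n) : ℝ)⁻¹) * ENNReal.ofReal (L n k) :=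
        ENNReal.tsum_le_tsum (fun n => ENNReal.tsum_le_tsum (fun k => hpoint n k))
    _ = ∑' n, ENNReal.ofReal ((m:ℝ) * (q θ (j0 θ m n) : ℝ)⁻¹)
          * ENNReal.ofReal (Real.log ((q θ (n+1) : ℝ) / (q θ n : ℝ))) := by
        congr 1
        funext n
        rw [ENNReal.tsum_mul_left, tele1 n]
    _ ≤ ∑' n, (ENNReal.ofReal ((m:ℝ) * ((q θ n : ℝ)⁻¹ * Real.log ((q θ (n+1) : ℝ) / (q θ n : ℝ))))
          + ENNReal.ofReal ((m:ℝ) * Real.log (m+1) * (q θ (n - K) : ℝ)⁻¹)) := by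
        apply ENNReal.tsum_le_tsum
        intro n
        rw [← ENNReal.ofReal_mul (mul_nonneg (by positivity) (inv_nonneg.2 (qpos hθ (j0 θ m n)).le))]
        calc ENNReal.ofReal ((m:ℝ) * (q θ (j0 θ m n) : ℝ)⁻¹ * Real.log ((q θ (n+1) : ℝ) / (q θ n : ℝ)))
            ≤ ENNReal.ofReal ((m:ℝ) * ((q θ n : ℝ)⁻¹ * Real.log ((q θ (n+1) : ℝ) / (q θ n : ℝ)))
                + (m:ℝ) * Real.log (m+1) * (q θ (n - K) : ℝ)⁻¹) :=
              ENNReal.ofReal_le_ofReal (err_bound hθ hm n)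
          _ ≤ _ := ENNReal.ofReal_add_le
    _ = (∑' n, ENNReal.ofReal ((m:ℝ) * ((q θ n : ℝ)⁻¹ * Real.log ((q θ (n+1) : ℝ) / (q θ n : ℝ)))))
          + ∑' n, ENNReal.ofReal ((m:ℝ) * Real.log (m+1) * (q θ (n - K) : ℝ)⁻¹) := ENNReal.tsum_add
    _ ≤ ENNReal.ofReal m * Ss θ + ENNReal.ofReal (c * 7) := by
        apply add_le_add
        · rw [Ss, ← ENNReal.tsum_mul_left]
          apply le_of_eq
          congr 1
          funext n
          rw [← ENNReal.ofReal_mul (by positivity)]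
        · have hlogm : (0:ℝ) ≤ Real.log (m+1) := Real.log_nonneg (by push_cast; norm_num)
          apply tsum_ofReal_geom _ c
            (by rw [hc]; exact mul_nonneg (mul_nonneg (by positivity) hlogm) (by positivity))
          intro n
          rw [hc, hK]
          exact em_le hθ hm n

end Main


end BJ

/-- For every positive integer `m` there is a constant `C_m` such that
`Y(mθ) ≤ m·Y(θ) + C_m` for all irrational `θ`. -/
theorem brjunoY_mul_upper_bound (m : ℕ) (hm : 0 < m) :
    ∃ C : ℝ, ∀ θ : ℝ, Irrational θ →
      brjunoY (m * θ) ≤ (m : ℝ≥0∞) * brjunoY θ + ENNReal.ofReal C := by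
  have hm1 : 1 ≤ m := hm
  set c : ℝ := 1.5 * (m:ℝ) * Real.log (m+1) * ((0.85:ℝ)^(2 * Nat.log 2 m + 1))⁻¹ with hc
  have hlogm : (0:ℝ) ≤ Real.log (m+1) := Real.log_nonneg (by push_cast; norm_num)
  have hc0 : 0 ≤ c := by
    rw [hc]; exact mul_nonneg (mul_nonneg (by positivity) hlogm) (by positivity)
  refine ⟨(m:ℝ) * 35 + (c * 7 + 11), ?_⟩
  intro θ hθ
  have hθ2 : Irrational ((m:ℝ) * θ) := hθ.natCast_mul (by omega)
  have hY2 : brjunoY ((m:ℝ) * θ) = BJ.Ys ((m:ℝ) * θ) := by rw [brjunoY, if_pos hθ2]; rfl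
  have hY1 : brjunoY θ = BJ.Ys θ := by rw [brjunoY, if_pos hθ]; rfl
  have hcast : (m : ℝ≥0∞) = ENNReal.ofReal (m:ℝ) := (ENNReal.ofReal_natCast m).symm
  rw [hY2, hY1, hcast]
  calc BJ.Ys ((m:ℝ) * θ) ≤ BJ.Ss ((m:ℝ) * θ) + ENNReal.ofReal 11 := BJ.Ys_le_Ss hθ2
    _ ≤ (ENNReal.ofReal m * BJ.Ss θ + ENNReal.ofReal (c * 7)) + ENNReal.ofReal 11 :=
        add_le_add_left (BJ.Ss_mul_le hθ hm1) _
    _ ≤ (ENNReal.ofReal m * (BJ.Ys θ + ENNReal.ofReal 35) + ENNReal.ofReal (c * 7))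
          + ENNReal.ofReal 11 :=
        add_le_add_left (add_le_add_left (mul_le_mul_right (BJ.Ss_le_Ys hθ) _) _) _
    _ = ENNReal.ofReal m * BJ.Ys θ
          + (ENNReal.ofReal m * ENNReal.ofReal 35 + (ENNReal.ofReal (c * 7) + ENNReal.ofReal 11)) := by
        ring
    _ = ENNReal.ofReal m * BJ.Ys θ + ENNReal.ofReal ((m:ℝ) * 35 + (c * 7 + 11)) := by
        rw [← ENNReal.ofReal_mul (by positivity : (0:ℝ) ≤ (m:ℝ)),
          ← ENNReal.ofReal_add (by nlinarith : (0:ℝ) ≤ c * 7) (by norm_num : (0:ℝ) ≤ (11:ℝ)),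
          ← ENNReal.ofReal_add (by positivity : (0:ℝ) ≤ (m:ℝ) * 35) (by nlinarith : (0:ℝ) ≤ c * 7 + 11)]
end

section
/- The function Y (Yoccoz–Brjuno function) restricted to any nonempty open interval of ℝ is unbounded above. -/
open scoped ENNReal
open Classical

namespace BY
noncomputable def cw : List ℕ → ℝ → ℝ
  | [], x => x
  | k :: L, x => 1 / (k + cw L x)
def ok (L : List ℕ) : Prop := ∀ k ∈ L, 1 ≤ k


/-- cell A map values: x ∈ (0,1) → 1/(k+x) ∈ (1/(k+1), 1/k). -/
lemma cellA (k : ℕ) (hk : 1 ≤ k) {x : ℝ} (hx0 : 0 < x) (hx1 : x < 1) :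
    1/((k:ℝ)+1) < 1/((k:ℝ)+x) ∧ 1/((k:ℝ)+x) < 1/(k:ℝ) := by
  have hk0 : (0:ℝ) < k := by exact_mod_cast hk
  constructor
  · rw [div_lt_div_iff₀ (by positivity) (by linarith)]; linarith
  · rw [div_lt_div_iff₀ (by linarith) hk0]; linarith

/-- cell B map values: x ∈ (0,1) → (k+x)/(k+1+x) ∈ (k/(k+1), (k+1)/(k+2)). -/
lemma cellB (k : ℕ) {x : ℝ} (hx0 : 0 < x) (hx1 : x < 1) :
    (k:ℝ)/((k:ℝ)+1) < ((k:ℝ)+x)/((k:ℝ)+1+x) ∧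
      ((k:ℝ)+x)/((k:ℝ)+1+x) < ((k:ℝ)+1)/((k:ℝ)+2) := by
  have hk0 : (0:ℝ) ≤ k := Nat.cast_nonneg k
  constructor
  · rw [div_lt_div_iff₀ (by linarith) (by linarith)]; nlinarith
  · rw [div_lt_div_iff₀ (by linarith) (by linarith)]; nlinarith

/-- cw of [1,k] is the Möbius map (k+x)/(k+1+x). -/
lemma cw_onek (k : ℕ) {x : ℝ} (hx0 : 0 < x) :
    cw [1, k] x = ((k:ℝ)+x)/((k:ℝ)+1+x) := by
  have hk0 : (0:ℝ) ≤ k := Nat.cast_nonneg k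
  have h1 : (0:ℝ) < (k:ℝ) + x := by linarith
  show 1/((1:ℕ) + (1 / ((k:ℝ) + x))) = _
  rw [Nat.cast_one]
  rw [div_eq_div_iff (by positivity : (1 + 1/((k:ℝ)+x)) ≠ 0) (by positivity : ((k:ℝ)+1+x) ≠ 0)]
  field_simp
  ring

/-- Pullback step for cell A. -/
lemma stepA (k : ℕ) (hk2 : 2 ≤ k) (s t : ℝ) (hs0 : 0 < s) (hst : s < t)
    (hsα : 1/((k:ℝ)+1) ≤ s) (htβ : t ≤ 1/(k:ℝ)) :
    0 ≤ 1/t - (k:ℝ) ∧ 1/s - (k:ℝ) ≤ 1 ∧ 4*(t-s) < (1/s - (k:ℝ)) - (1/t - (k:ℝ)) ∧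
    ∀ y : ℝ, 1/t - (k:ℝ) < y → y < 1/s - (k:ℝ) →
      s < 1/((k:ℝ)+y) ∧ 1/((k:ℝ)+y) < t := by
  have hk2' : (2:ℝ) ≤ (k:ℝ) := by exact_mod_cast hk2
  have hk0 : (0:ℝ) < k := by linarith
  have ht0 : 0 < t := hs0.trans hst
  have hthalf : t ≤ 1/2 := htβ.trans (by rw [div_le_div_iff₀ hk0 two_pos]; linarith)
  have hkt : (k:ℝ) * t ≤ 1 := by rw [le_div_iff₀ hk0] at htβ; linarith
  have hks : 1 ≤ ((k:ℝ)+1) * s := by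
    rw [div_le_iff₀ (by positivity : (0:ℝ) < (k:ℝ)+1)] at hsα; linarith
  have hst4 : s * t < 1/4 := by
    have h1 : s*t < t*t := mul_lt_mul_of_pos_right hst ht0
    have h2 : t*t ≤ (1/2)*(1/2) := mul_le_mul hthalf hthalf ht0.le (by norm_num)
    linarith
  have hdiff : (1/s - (k:ℝ)) - (1/t - (k:ℝ)) = (t - s)/(s*t) := by
    field_simp; ring
  refine ⟨?_, ?_, ?_, ?_⟩
  · rw [sub_nonneg, le_div_iff₀ ht0]; linarith
  · rw [sub_le_iff_le_add, div_le_iff₀ hs0]; linarith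
  · rw [hdiff, lt_div_iff₀ (by positivity)]
    nlinarith [mul_pos (sub_pos.mpr hst) (by linarith : (0:ℝ) < 1 - 4*(s*t))]
  · intro y hy1 hy2
    have hky : (0:ℝ) < (k:ℝ) + y := by nlinarith [one_div_pos.mpr ht0]
    constructor
    · rw [lt_div_iff₀ hky]
      have h1 : (k:ℝ) + y < 1/s := by linarith
      rw [lt_div_iff₀ hs0] at h1; nlinarith
    · rw [div_lt_iff₀ hky]
      have h1 : 1/t < (k:ℝ) + y := by linarith
      rw [div_lt_iff₀ ht0] at h1; nlinarith

/-- Pullback step for cell B. -/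
lemma stepB (k : ℕ) (hk1 : 1 ≤ k) (s t : ℝ) (hst : s < t)
    (hsα : (k:ℝ)/((k:ℝ)+1) ≤ s) (htβ : t ≤ ((k:ℝ)+1)/((k:ℝ)+2)) :
    0 ≤ (((k:ℝ)+1)*s - k)/(1-s) ∧ (((k:ℝ)+1)*t - k)/(1-t) ≤ 1 ∧
    4*(t-s) < (((k:ℝ)+1)*t - k)/(1-t) - (((k:ℝ)+1)*s - k)/(1-s) ∧
    ∀ y : ℝ, (((k:ℝ)+1)*s - k)/(1-s) < y → y < (((k:ℝ)+1)*t - k)/(1-t) →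
      s < ((k:ℝ)+y)/((k:ℝ)+1+y) ∧ ((k:ℝ)+y)/((k:ℝ)+1+y) < t := by
  have hk1' : (1:ℝ) ≤ (k:ℝ) := by exact_mod_cast hk1
  have hsα' : (1:ℝ)/2 ≤ s := le_trans (by rw [div_le_div_iff₀ two_pos (by linarith)]; linarith) hsα
  have htβ' : t < 1 := lt_of_le_of_lt htβ (by rw [div_lt_one (by linarith)]; linarith)
  have h1t : 0 < 1 - t := by linarith
  have h1s : 0 < 1 - s := by linarith
  have hks : (k:ℝ) ≤ ((k:ℝ)+1) * s := by
    rw [div_le_iff₀ (by linarith : (0:ℝ) < (k:ℝ)+1)] at hsα; linarith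
  have hkt : ((k:ℝ)+2) * t ≤ (k:ℝ)+1 := by
    rw [le_div_iff₀ (by linarith : (0:ℝ) < (k:ℝ)+2)] at htβ; linarith
  have h1s_half : 1 - s ≤ 1/2 := by linarith
  have h1t_half : 1 - t < 1/2 := by linarith
  have hprod : (1-s)*(1-t) < 1/4 := by nlinarith
  have hdiff : (((k:ℝ)+1)*t - k)/(1-t) - (((k:ℝ)+1)*s - k)/(1-s) = (t - s)/((1-s)*(1-t)) := by
    field_simp; ring
  refine ⟨?_, ?_, ?_, ?_⟩
  · apply div_nonneg (by linarith) h1s.le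
  · rw [div_le_one h1t]; linarith
  · rw [hdiff, lt_div_iff₀ (by positivity)]
    nlinarith [mul_pos (sub_pos.mpr hst) (by linarith : (0:ℝ) < 1 - 4*((1-s)*(1-t)))]
  · intro y hy1 hy2
    have hy0 : 0 ≤ y := le_trans (div_nonneg (by linarith) h1s.le) hy1.le
    have hky : (0:ℝ) < (k:ℝ)+1+y := by linarith
    have hy1' : ((k:ℝ)+1)*s - k < y*(1-s) := by rw [div_lt_iff₀ h1s] at hy1; linarith
    have hy2' : y*(1-t) < ((k:ℝ)+1)*t - k := by rw [lt_div_iff₀ h1t] at hy2; linarith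
    constructor
    · rw [lt_div_iff₀ hky]; nlinarith
    · rw [div_lt_iff₀ hky]; nlinarith

set_option maxHeartbeats 2000000 in
lemma steer : ∀ n : ℕ, ∀ u v : ℝ, 0 ≤ u → v ≤ 1 → u < v → 1 < (4/3)^n * (v - u) →
    ∃ D : List ℕ, ok D ∧ ∀ x : ℝ, 0 < x → x < 1 → u < cw D x ∧ cw D x < v := by
  intro n
  induction n with
  | zero => intro u v hu hv huv hlen; rw [pow_zero, one_mul] at hlen; linarith
  | succ n ih =>
      intro u v hu hv huv hlen
      obtain ⟨w, hwirr, hw1, hw2⟩ :=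
        exists_irrational_btwn (show u + (v-u)/3 < v - (v-u)/3 by linarith)
      have hw0 : 0 < w := by linarith
      have hwlt1 : w < 1 := by linarith
      have hwhalf : w ≠ 1/2 := by
        intro h; exact hwirr ⟨1/2, by rw [h]; norm_num⟩
      have hp : (0:ℝ) < (4/3)^n := by positivity
      have hlen' : 1 < (4/3)^n * (4/3) * (v - u) := by
        rw [← pow_succ]; exact hlen
      rcases lt_or_gt_of_ne hwhalf with hcase | hcase
      · -- Case A : w < 1/2, single digit k ≥ 2
        obtain ⟨k, hk2, hαw, hwβ⟩ :
            ∃ k : ℕ, 2 ≤ k ∧ 1/((k:ℝ)+1) < w ∧ w < 1/(k:ℝ) := by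
          refine ⟨⌊1/w⌋₊, ?_, ?_, ?_⟩
          · exact Nat.le_floor (by
              have : 2 < 1/w := by rw [lt_div_iff₀ hw0]; linarith
              exact_mod_cast this.le)
          · have hlt : 1/w < (⌊1/w⌋₊:ℝ) + 1 := Nat.lt_floor_add_one (1/w)
            rw [div_lt_iff₀ (by positivity)]
            rw [div_lt_iff₀ hw0] at hlt; linarith
          · have hirr_inv : Irrational (1/w) := by rw [one_div]; exact hwirr.inv
            have hklt : (⌊1/w⌋₊:ℝ) < 1/w :=
              lt_of_le_of_ne (Nat.floor_le (by positivity)) (Ne.symm (hirr_inv.ne_nat _))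
            have hk0 : (0:ℝ) < (⌊1/w⌋₊:ℝ) := by
              have : 1 ≤ ⌊1/w⌋₊ := Nat.le_floor (by
                have : 1 < 1/w := by rw [lt_div_iff₀ hw0]; linarith
                exact_mod_cast this.le)
              exact_mod_cast this
            rw [lt_div_iff₀ hk0]
            rw [lt_div_iff₀ hw0] at hklt; nlinarith
        have hk0 : (0:ℝ) < k := by exact_mod_cast (by omega : 0 < k)
        by_cases hterm : u ≤ 1/((k:ℝ)+1) ∧ 1/(k:ℝ) ≤ v
        · refine ⟨[k], by intro j hj; simp at hj; omega, ?_⟩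
          intro x hx0 hx1
          obtain ⟨h1, h2⟩ := cellA k (by omega) hx0 hx1
          have : cw [k] x = 1/((k:ℝ)+x) := by simp [cw]
          rw [this]
          exact ⟨lt_of_le_of_lt hterm.1 h1, lt_of_lt_of_le h2 hterm.2⟩
        · have hs0 : 0 < max u (1/((k:ℝ)+1)) := lt_max_of_lt_right (by positivity)
          have hsw : max u (1/((k:ℝ)+1)) < w := max_lt (by linarith) hαw
          have hwt : w < min v (1/(k:ℝ)) := lt_min (by linarith) hwβ
          have hst : max u (1/((k:ℝ)+1)) < min v (1/(k:ℝ)) := hsw.trans hwt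
          have hst3 : (v-u)/3 < min v (1/(k:ℝ)) - max u (1/((k:ℝ)+1)) := by
            rcases le_or_gt u (1/((k:ℝ)+1)) with h1 | h1
            · have hvβ : v < 1/(k:ℝ) := by
                by_contra h2; push_neg at h2; exact hterm ⟨h1, h2⟩
              rw [min_eq_left hvβ.le]
              have := le_max_left u (1/((k:ℝ)+1))
              linarith [max_lt (show u < w by linarith) hαw]
            · rw [max_eq_left h1.le]
              linarith [min_le_left v (1/(k:ℝ)), lt_min (show w < v by linarith) hwβ]
          obtain ⟨hA1, hA2, hA3, hA4⟩ := stepA k hk2 _ _ hs0 hst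
            (le_max_right _ _) (min_le_right _ _)
          have hlen₂ : 1 < (4/3)^n *
              ((1/(max u (1/((k:ℝ)+1))) - (k:ℝ)) - (1/(min v (1/(k:ℝ))) - (k:ℝ))) := by
            have h3 : (4/3)*(v-u) <
                (1/(max u (1/((k:ℝ)+1))) - (k:ℝ)) - (1/(min v (1/(k:ℝ))) - (k:ℝ)) := by
              linarith
            nlinarith [mul_lt_mul_of_pos_left h3 hp]
          obtain ⟨D, hD, hDx⟩ := ih _ _ hA1 hA2 (by linarith) hlen₂
          refine ⟨k :: D, ?_, ?_⟩
          · intro j hj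
            rcases List.mem_cons.mp hj with h | h
            · omega
            · exact hD j h
          · intro x hx0 hx1
            obtain ⟨hy1, hy2⟩ := hDx x hx0 hx1
            obtain ⟨hc1, hc2⟩ := hA4 (cw D x) hy1 hy2
            have : cw (k :: D) x = 1/((k:ℝ) + cw D x) := rfl
            rw [this]
            exact ⟨lt_of_le_of_lt (le_max_left _ _) hc1,
              lt_of_lt_of_le hc2 (min_le_left _ _)⟩
      · -- Case B : w > 1/2, digits [1, k]
        have h1w : 0 < 1 - w := by linarith
        obtain ⟨k, hk1, hαw, hwβ⟩ :
            ∃ k : ℕ, 1 ≤ k ∧ (k:ℝ)/((k:ℝ)+1) < w ∧ w < ((k:ℝ)+1)/((k:ℝ)+2) := by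
          refine ⟨⌊w/(1-w)⌋₊, ?_, ?_, ?_⟩
          · exact Nat.le_floor (by
              have : 1 < w/(1-w) := by rw [lt_div_iff₀ h1w]; linarith
              exact_mod_cast this.le)
          · have hklt : (⌊w/(1-w)⌋₊:ℝ) < w/(1-w) := by
              refine lt_of_le_of_ne (Nat.floor_le (by positivity)) ?_
              intro h
              have hw' : w = (⌊w/(1-w)⌋₊:ℝ)/((⌊w/(1-w)⌋₊:ℝ)+1) := by
                rw [eq_comm, div_eq_iff h1w.ne'] at h
                rw [eq_div_iff (by positivity)]
                linarith
              exact hwirr ⟨(⌊w/(1-w)⌋₊:ℚ)/((⌊w/(1-w)⌋₊:ℚ)+1), by push_cast; rw [← hw']⟩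
            rw [lt_div_iff₀ h1w] at hklt
            rw [div_lt_iff₀ (by positivity)]
            linarith
          · have hlt : w/(1-w) < (⌊w/(1-w)⌋₊:ℝ) + 1 := Nat.lt_floor_add_one _
            rw [div_lt_iff₀ h1w] at hlt
            rw [lt_div_iff₀ (by positivity)]
            nlinarith
        by_cases hterm : u ≤ (k:ℝ)/((k:ℝ)+1) ∧ ((k:ℝ)+1)/((k:ℝ)+2) ≤ v
        · refine ⟨[1, k], by intro j hj; simp at hj; omega, ?_⟩
          intro x hx0 hx1
          obtain ⟨h1, h2⟩ := cellB k hx0 hx1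
          rw [cw_onek k hx0]
          exact ⟨lt_of_le_of_lt hterm.1 h1, lt_of_lt_of_le h2 hterm.2⟩
        · have hk0 : (0:ℝ) ≤ (k:ℝ) := Nat.cast_nonneg k
          have hsw : max u ((k:ℝ)/((k:ℝ)+1)) < w := max_lt (by linarith) hαw
          have hwt : w < min v (((k:ℝ)+1)/((k:ℝ)+2)) := lt_min (by linarith) hwβ
          have hst : max u ((k:ℝ)/((k:ℝ)+1)) < min v (((k:ℝ)+1)/((k:ℝ)+2)) := hsw.trans hwt
          have hst3 : (v-u)/3 <
              min v (((k:ℝ)+1)/((k:ℝ)+2)) - max u ((k:ℝ)/((k:ℝ)+1)) := by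
            rcases le_or_gt u ((k:ℝ)/((k:ℝ)+1)) with h1 | h1
            · have hvβ : v < ((k:ℝ)+1)/((k:ℝ)+2) := by
                by_contra h2; push_neg at h2; exact hterm ⟨h1, h2⟩
              rw [min_eq_left hvβ.le]
              linarith [max_lt (show u < w by linarith) hαw]
            · rw [max_eq_left h1.le]
              linarith [lt_min (show w < v by linarith) hwβ]
          obtain ⟨hB1, hB2, hB3, hB4⟩ := stepB k hk1 _ _ hst
            (le_max_right _ _) (min_le_right _ _)
          have hlen₂ : 1 < (4/3)^n *
              ((((k:ℝ)+1)*(min v (((k:ℝ)+1)/((k:ℝ)+2))) - k)/(1-(min v (((k:ℝ)+1)/((k:ℝ)+2)))) -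
               (((k:ℝ)+1)*(max u ((k:ℝ)/((k:ℝ)+1))) - k)/(1-(max u ((k:ℝ)/((k:ℝ)+1))))) := by
            have h3 : (4/3)*(v-u) <
                (((k:ℝ)+1)*(min v (((k:ℝ)+1)/((k:ℝ)+2))) - k)/(1-(min v (((k:ℝ)+1)/((k:ℝ)+2)))) -
                (((k:ℝ)+1)*(max u ((k:ℝ)/((k:ℝ)+1))) - k)/(1-(max u ((k:ℝ)/((k:ℝ)+1)))) := by
              linarith
            nlinarith [mul_lt_mul_of_pos_left h3 hp]
          obtain ⟨D, hD, hDx⟩ := ih _ _ hB1 hB2 (by linarith) hlen₂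
          refine ⟨1 :: k :: D, ?_, ?_⟩
          · intro j hj
            rcases List.mem_cons.mp hj with h | h
            · omega
            · rcases List.mem_cons.mp h with h' | h'
              · omega
              · exact hD j h'
          · intro x hx0 hx1
            obtain ⟨hy1, hy2⟩ := hDx x hx0 hx1
            have hy0 : 0 < cw D x := lt_of_le_of_lt hB1 hy1
            obtain ⟨hc1, hc2⟩ := hB4 (cw D x) hy1 hy2
            have hrw : cw (1 :: k :: D) x = cw [1, k] (cw D x) := rfl
            rw [hrw, cw_onek k hy0]
            exact ⟨lt_of_le_of_lt (le_max_left _ _) hc1,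
              lt_of_lt_of_le hc2 (min_le_left _ _)⟩

noncomputable def gg : ℝ := (Real.sqrt 5 - 1) / 2

lemma gg_pos : 0 < gg := by
  have h := Real.sq_sqrt (by norm_num : (5:ℝ) ≥ 0)
  have h2 := Real.sqrt_nonneg 5
  unfold gg; nlinarith

lemma gg_lt_one : gg < 1 := by
  have h := Real.sq_sqrt (by norm_num : (5:ℝ) ≥ 0)
  have h2 := Real.sqrt_nonneg 5
  unfold gg; nlinarith

lemma gg_mul : gg * (gg + 1) = 1 := by
  have h := Real.sq_sqrt (by norm_num : (5:ℝ) ≥ 0)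
  unfold gg; nlinarith

lemma one_div_gg : 1 / gg = gg + 1 := by
  rw [eq_comm, eq_div_iff (ne_of_gt gg_pos)]
  nlinarith [gg_mul]

lemma irrational_gg : Irrational gg := by
  have h5 : Irrational (Real.sqrt 5) := (by norm_num : Nat.Prime 5).irrational_sqrt
  have h1 : Irrational (Real.sqrt 5 - 1) := by
    have := h5.sub_intCast 1
    simpa using this
  have h2 : Irrational ((Real.sqrt 5 - 1) / 2) := by
    have := h1.div_intCast (by norm_num : (2:ℤ) ≠ 0)
    simpa using this
  simpa [gg] using h2

noncomputable def cf : List ℕ → ℝ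
  | [] => gg
  | k :: L => 1 / (k + cf L)

lemma cf_mem (L : List ℕ) (h : ok L) : 0 < cf L ∧ cf L < 1 := by
  induction L with
  | nil => exact ⟨gg_pos, gg_lt_one⟩
  | cons k L ih =>
      have hk : (1:ℝ) ≤ k := by exact_mod_cast h k (List.mem_cons_self)
      have ih' := ih (fun j hj => h j (List.mem_cons_of_mem _ hj))
      simp only [cf]
      constructor
      · apply div_pos one_pos; linarith [ih'.1]
      · rw [div_lt_one (by linarith [ih'.1])]; linarith [ih'.1]

lemma irrational_cf (L : List ℕ) (h : ok L) : Irrational (cf L) := by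
  induction L with
  | nil => exact irrational_gg
  | cons k L ih =>
      have ih' := ih (fun j hj => h j (List.mem_cons_of_mem _ hj))
      have h1 : Irrational ((k:ℝ) + cf L) := ih'.natCast_add k
      simpa [cf, one_div] using h1.inv

lemma ok_tail {L : List ℕ} (h : ok L) : ok L.tail :=
  fun j hj => h j (List.mem_of_mem_tail hj)

lemma ok_drop {L : List ℕ} (h : ok L) (n : ℕ) : ok (L.drop n) :=
  fun j hj => h j (List.mem_of_mem_drop hj)

lemma ok_append {A B : List ℕ} (hA : ok A) (hB : ok B) : ok (A ++ B) := by
  intro j hj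
  rcases List.mem_append.mp hj with h | h
  · exact hA j h
  · exact hB j h

lemma fract_cf (L : List ℕ) (h : ok L) : Int.fract (cf L) = cf L :=
  Int.fract_eq_self.2 ⟨(cf_mem L h).1.le, (cf_mem L h).2⟩

lemma fract_inv_cf (L : List ℕ) (h : ok L) : Int.fract (1 / cf L) = cf L.tail := by
  cases L with
  | nil => rw [cf, one_div_gg, Int.fract_add_one, List.tail_nil, cf,
      Int.fract_eq_self.2 ⟨gg_pos.le, gg_lt_one⟩]
  | cons k L =>
      have h' := ok_tail h
      rw [cf, one_div_one_div, Int.fract_natCast_add, List.tail_cons, fract_cf L h']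

lemma gauss_eq (L : List ℕ) (h : ok L) (m : ℤ) :
    ∀ n, gaussIter ((m:ℝ) + cf L) n = cf (L.drop n) := by
  intro n
  induction n with
  | zero => rw [gaussIter, Int.fract_intCast_add, List.drop_zero, fract_cf L h]
  | succ n ih =>
      rw [gaussIter, ih, fract_inv_cf _ (ok_drop h n), List.tail_drop]

lemma cf_eq_cw (L : List ℕ) : cf L = cw L gg := by
  induction L with
  | nil => rfl
  | cons k L ih => simp [cf, cw, ih]

lemma cw_app (A B : List ℕ) (x : ℝ) : cw (A ++ B) x = cw A (cw B x) := by
  induction A with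
  | nil => rfl
  | cons k A ih => simp [cw, ih]

lemma cf_app (A B : List ℕ) : cf (A ++ B) = cw A (cf B) := by
  rw [cf_eq_cw, cw_app, ← cf_eq_cw]

noncomputable def lb : List ℕ → ℝ
  | [] => 1
  | k :: L => (1/((k:ℝ)+1)) * lb L

lemma lb_pos (D : List ℕ) : 0 < lb D := by
  induction D with
  | nil => norm_num [lb]
  | cons k D ih =>
      have : (0:ℝ) < (k:ℝ) + 1 := by positivity
      simp only [lb]
      positivity

lemma prod_lb (D : List ℕ) (M : List ℕ) (hDM : ok (D ++ M)) :
    lb D ≤ ∏ i ∈ Finset.range D.length, cf ((D ++ M).drop i) := by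
  induction D with
  | nil => simp [lb]
  | cons d D ih =>
      have hDM' : ok (D ++ M) := fun j hj => hDM j (by
        simp only [List.cons_append, List.mem_cons]; right; exact hj)
      have ih' := ih hDM'
      have hprodpos : 0 < ∏ i ∈ Finset.range D.length, cf ((D ++ M).drop i) := by
        apply Finset.prod_pos
        intro i _
        exact (cf_mem _ (ok_drop hDM' i)).1
      have hc : 0 < cf (D ++ M) ∧ cf (D ++ M) < 1 := cf_mem _ hDM'
      have hf0 : 1/((d:ℝ)+1) ≤ cf (d :: (D ++ M)) := by
        show 1/((d:ℝ)+1) ≤ 1/((d:ℝ) + cf (D ++ M))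
        apply one_div_le_one_div_of_le
        · linarith [hc.1, Nat.cast_nonneg (α := ℝ) d]
        · linarith [hc.2]
      have key := mul_le_mul ih' hf0 (by positivity) hprodpos.le
      calc lb (d :: D) = lb D * (1/((d:ℝ)+1)) := by rw [lb]; ring
        _ ≤ (∏ i ∈ Finset.range D.length, cf ((D ++ M).drop i)) * cf (d :: (D ++ M)) := key
        _ = ∏ i ∈ Finset.range (d :: D).length, cf (((d :: D) ++ M).drop i) := by
            rw [List.length_cons, Finset.prod_range_succ']
            simp [List.cons_append, List.drop_succ_cons]



noncomputable def tau (L : List ℕ) (n : ℕ) : ℝ :=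
  (∏ i ∈ Finset.range n, cf (L.drop i)) * Real.log (1 / cf (L.drop n))

lemma tau_nonneg (L : List ℕ) (hL : ok L) (n : ℕ) : 0 ≤ tau L n := by
  apply mul_nonneg
  · apply Finset.prod_nonneg; intro i _; exact (cf_mem _ (ok_drop hL i)).1.le
  · apply Real.log_nonneg
    have h := cf_mem _ (ok_drop hL n)
    rw [le_div_iff₀ h.1]; linarith [h.2]

lemma brjuno_eq (L : List ℕ) (hL : ok L) (m : ℤ) :
    brjunoY ((m:ℝ) + cf L) = ∑' n, ENNReal.ofReal (tau L n) := by
  have hirr : Irrational ((m:ℝ) + cf L) := (irrational_cf L hL).intCast_add m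
  rw [brjunoY, if_pos hirr]
  exact tsum_congr fun n => by simp only [gauss_eq L hL m, tau]

lemma log_one_div_gg_nonneg : 0 ≤ Real.log (1/gg) :=
  Real.log_nonneg (by rw [one_div_gg]; linarith [gg_pos])

lemma brjuno_ne_top (L : List ℕ) (hL : ok L) (m : ℤ) :
    brjunoY ((m:ℝ) + cf L) ≠ ⊤ := by
  have hggne : gg ≠ 0 := gg_pos.ne'
  have hC : 0 ≤ (1/gg)^L.length * Real.log (1/gg) := by
    apply mul_nonneg (pow_nonneg (le_of_lt (one_div_pos.mpr gg_pos)) _) log_one_div_gg_nonneg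
  have hbound : ∀ n, tau L n ≤ (if n < L.length then tau L n else 0) +
      ((1/gg)^L.length * Real.log (1/gg)) * gg^n := by
    intro n
    by_cases hn : n < L.length
    · rw [if_pos hn]
      have : 0 ≤ ((1/gg)^L.length * Real.log (1/gg)) * gg^n :=
        mul_nonneg hC (pow_nonneg gg_pos.le _)
      linarith
    · rw [if_neg hn]
      push_neg at hn
      obtain ⟨j, rfl⟩ : ∃ j, n = L.length + j := ⟨n - L.length, by omega⟩
      have hdrop : ∀ i, L.length ≤ i → L.drop i = [] :=
        fun i hi => List.drop_eq_nil_of_le hi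
      rw [tau, hdrop _ (by omega), Finset.prod_range_add]
      have h2 : ∏ i ∈ Finset.range j, cf (L.drop (L.length + i)) = gg^j := by
        rw [Finset.prod_congr rfl fun i _ => by rw [hdrop _ (by omega)]]
        simp [cf, Finset.prod_const]
      have h1le : ∏ i ∈ Finset.range L.length, cf (L.drop i) ≤ 1 :=
        Finset.prod_le_one (fun i _ => (cf_mem _ (ok_drop hL i)).1.le)
          (fun i _ => (cf_mem _ (ok_drop hL i)).2.le)
      have h1nn : 0 ≤ ∏ i ∈ Finset.range L.length, cf (L.drop i) :=
        Finset.prod_nonneg fun i _ => (cf_mem _ (ok_drop hL i)).1.le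
      rw [h2]
      have hCeq : ((1/gg)^L.length * Real.log (1/gg)) * gg^(L.length + j)
          = gg^j * Real.log (1/gg) := by
        have hone : (1/gg)^L.length * gg^L.length = 1 := by
          rw [← mul_pow, one_div_mul_cancel hggne, one_pow]
        calc ((1/gg)^L.length * Real.log (1/gg)) * gg^(L.length + j)
            = ((1/gg)^L.length * gg^L.length) * (Real.log (1/gg) * gg^j) := by
              rw [pow_add]; ring
          _ = gg^j * Real.log (1/gg) := by rw [hone, one_mul, mul_comm]
      rw [zero_add, hCeq]
      have hstep : (∏ i ∈ Finset.range L.length, cf (L.drop i)) * gg^j ≤ 1 * gg^j :=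
        mul_le_mul_of_nonneg_right h1le (pow_nonneg gg_pos.le _)
      have := mul_le_mul_of_nonneg_right hstep log_one_div_gg_nonneg
      calc (∏ i ∈ Finset.range L.length, cf (L.drop i)) * gg^j * Real.log (1/gg)
          ≤ 1 * gg^j * Real.log (1/gg) := this
        _ = gg^j * Real.log (1/gg) := by ring
  have hs1 : Summable (fun n => if n < L.length then tau L n else 0) := by
    apply summable_of_ne_finset_zero (s := Finset.range L.length)
    intro b hb
    rw [Finset.mem_range] at hb
    rw [if_neg hb]
  have hs2 : Summable (fun n => ((1/gg)^L.length * Real.log (1/gg)) * gg^n) :=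
    (summable_geometric_of_lt_one gg_pos.le gg_lt_one).mul_left _
  have hsum := hs1.add hs2
  have hnn : ∀ n, 0 ≤ (if n < L.length then tau L n else 0) +
      ((1/gg)^L.length * Real.log (1/gg)) * gg^n := by
    intro n
    have : 0 ≤ ((1/gg)^L.length * Real.log (1/gg)) * gg^n := mul_nonneg hC (pow_nonneg gg_pos.le _)
    split
    · linarith [tau_nonneg L hL n]
    · linarith
  have hle : brjunoY ((m:ℝ) + cf L) ≤
      ENNReal.ofReal (∑' n, ((if n < L.length then tau L n else 0) +
        ((1/gg)^L.length * Real.log (1/gg)) * gg^n)) := by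
    rw [brjuno_eq L hL m, ENNReal.ofReal_tsum_of_nonneg hnn hsum]
    exact ENNReal.tsum_le_tsum fun n => ENNReal.ofReal_le_ofReal (hbound n)
  exact ne_top_of_le_ne_top ENNReal.ofReal_ne_top hle

end BY

/-- The Yoccoz–Brjuno function is unbounded above on every nonempty open interval,
even when restricted to Brjuno numbers (points where it is finite). -/
theorem brjunoY_unbounded_on_intervals :
    ∀ a b : ℝ, a < b → ∀ M : ℝ, ∃ θ : ℝ, a < θ ∧ θ < b ∧ Irrational θ ∧
      brjunoY θ ≠ ⊤ ∧ ENNReal.ofReal M < brjunoY θ := by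
  intro a b hab M
  obtain ⟨w0, hw0irr, hw0a, hw0b⟩ := exists_irrational_btwn hab
  have hfr0 : 0 < Int.fract w0 := by
    rcases lt_or_eq_of_le (Int.fract_nonneg w0) with h | h
    · exact h
    · exfalso
      apply hw0irr
      refine ⟨(⌊w0⌋ : ℚ), ?_⟩
      have := Int.fract_add_floor w0
      push_cast
      linarith
  have hfr1 : Int.fract w0 < 1 := Int.fract_lt_one w0
  have hfr_eq : Int.fract w0 = w0 - ⌊w0⌋ := by
    have := Int.fract_add_floor w0; linarith
  obtain ⟨u, v, hu0, hv1, hau, hvb, huf, hfv⟩ :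
      ∃ u v : ℝ, 0 ≤ u ∧ v ≤ 1 ∧ a - (⌊w0⌋:ℝ) ≤ u ∧ v ≤ b - (⌊w0⌋:ℝ) ∧
        u < Int.fract w0 ∧ Int.fract w0 < v :=
    ⟨max (a - (⌊w0⌋:ℝ)) 0, min (b - (⌊w0⌋:ℝ)) 1, le_max_right _ _, min_le_right _ _,
      le_max_left _ _, min_le_left _ _,
      max_lt (by linarith) hfr0, lt_min (by linarith) hfr1⟩
  have huv : u < v := huf.trans hfv
  obtain ⟨n, hn⟩ := pow_unbounded_of_one_lt ((v-u)⁻¹) (by norm_num : (1:ℝ) < 4/3)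
  have hlen : 1 < (4/3)^n * (v - u) := by
    have h1 : 0 < v - u := by linarith
    have h2 := mul_lt_mul_of_pos_right hn h1
    rwa [inv_mul_cancel₀ h1.ne'] at h2
  obtain ⟨D, hD, hDx⟩ := BY.steer n u v hu0 hv1 huv hlen
  obtain ⟨K, hK1, hKM⟩ : ∃ K : ℕ, 1 ≤ K ∧ max M 0 + 1 ≤ BY.lb D * Real.log K := by
    refine ⟨⌈Real.exp ((max M 0 + 1) / BY.lb D)⌉₊ + 1, le_add_self, ?_⟩
    have hlb := BY.lb_pos D
    have hexp : Real.exp ((max M 0 + 1) / BY.lb D)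
        ≤ ((⌈Real.exp ((max M 0 + 1) / BY.lb D)⌉₊ + 1 : ℕ) : ℝ) := by
      refine le_trans (Nat.le_ceil _) ?_
      push_cast; linarith
    have hlog : (max M 0 + 1)/BY.lb D
        ≤ Real.log ((⌈Real.exp ((max M 0 + 1) / BY.lb D)⌉₊ + 1 : ℕ) : ℝ) := by
      exact (Real.le_log_iff_exp_le (by exact_mod_cast Nat.succ_pos _)).mpr hexp
    calc max M 0 + 1 = BY.lb D * ((max M 0 + 1)/BY.lb D) := by field_simp
      _ ≤ BY.lb D * Real.log _ := mul_le_mul_of_nonneg_left hlog hlb.le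
  have hokK : BY.ok [K] := by intro j hj; simp at hj; omega
  have hokL : BY.ok (D ++ [K]) := BY.ok_append hD hokK
  have hcfK := BY.cf_mem [K] hokK
  have hcf : u < BY.cf (D ++ [K]) ∧ BY.cf (D ++ [K]) < v := by
    rw [BY.cf_app]
    exact hDx _ hcfK.1 hcfK.2
  refine ⟨(⌊w0⌋:ℝ) + BY.cf (D ++ [K]), by linarith [hcf.1], by linarith [hcf.2],
    (BY.irrational_cf _ hokL).intCast_add ⌊w0⌋, BY.brjuno_ne_top _ hokL ⌊w0⌋, ?_⟩
  rw [BY.brjuno_eq _ hokL ⌊w0⌋]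
  have hdropD : (D ++ [K]).drop D.length = [K] := List.drop_left
  have hcfKeq : BY.cf [K] = 1/((K:ℝ) + BY.gg) := by simp [BY.cf]
  have hKpos : (0:ℝ) < (K:ℝ) := by exact_mod_cast hK1
  have hlogeq : Real.log (1 / BY.cf [K]) = Real.log ((K:ℝ) + BY.gg) := by
    rw [hcfKeq, one_div_one_div]
  have hlogK : Real.log (K:ℝ) ≤ Real.log ((K:ℝ) + BY.gg) :=
    Real.log_le_log hKpos (by linarith [BY.gg_pos])
  have hprod : BY.lb D ≤ ∏ i ∈ Finset.range D.length, BY.cf ((D ++ [K]).drop i) :=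
    BY.prod_lb D [K] hokL
  have hlogKnn : 0 ≤ Real.log (K:ℝ) := Real.log_nonneg (by exact_mod_cast hK1)
  have htau : BY.lb D * Real.log (K:ℝ) ≤ BY.tau (D ++ [K]) D.length := by
    rw [BY.tau, hdropD, hlogeq]
    exact mul_le_mul hprod hlogK hlogKnn (le_trans (BY.lb_pos D).le hprod)
  have hMlt : M < BY.tau (D ++ [K]) D.length := by
    have h1 : M ≤ max M 0 := le_max_left M 0
    linarith
  have hterm : ENNReal.ofReal M < ENNReal.ofReal (BY.tau (D ++ [K]) D.length) := by
    rw [ENNReal.ofReal_lt_ofReal_iff (by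
      have h0 : (0:ℝ) ≤ max M 0 := le_max_right M 0
      linarith)]
    exact hMlt
  exact lt_of_lt_of_le hterm (ENNReal.le_tsum D.length)
end
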